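/- arXiv:2308.11065 — 6 statements merged into one kernel-verified Lean document; each statement's English description precedes it below -/
import Mathlib

section
/- Let B^+ be a complete discrete valuation ring with uniformizer t, fraction field B, and residue field C, and let V be a finite-dimensional vector space over a field L with a fixed embedding L → B^+ making C an L-algebra. Let 𝓛 ⊆ V ⊗_L B be a B^+-lattice, and define the induced filtration F^i(V_C) as the image of (t^i 𝓛) ∩ (V ⊗_L B^+) in V_C = V ⊗_L C. If the filtration is trivial, i.e. F^0(V_C) = V_C and F^1(V_C) = 0, then 𝓛 = V ⊗_L B^+. -/
open Pointwise

section Aux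
variable {Bp B W : Type*} [CommRing Bp] [IsDomain Bp] [IsDiscreteValuationRing Bp]
    [Field B] [Algebra Bp B] [IsFractionRing Bp B]
    [AddCommGroup W] [Module B W] [Module Bp W] [IsScalarTower Bp B W]

set_option linter.unusedSectionVars false

lemma aux_mem_smul {a : Bp} {S : Submodule Bp W} {x : W} :
    x ∈ a • S ↔ ∃ y ∈ S, a • y = x := Submodule.mem_map

lemma aux_exists_pow_smul_mem (t : Bp) (ht : Irreducible t) (L0 : Submodule Bp W)
    (x : W) (hx : x ∈ Submodule.span B (L0 : Set W)) : ∃ n : ℕ, t ^ n • x ∈ L0 := by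
  induction hx using Submodule.span_induction with
  | mem y hy => exact ⟨0, by simpa using hy⟩
  | zero => exact ⟨0, by simp⟩
  | add y z _ _ hy hz =>
      obtain ⟨n, hn⟩ := hy
      obtain ⟨m, hm⟩ := hz
      refine ⟨n + m, ?_⟩
      rw [smul_add]
      refine L0.add_mem ?_ ?_
      · rw [pow_add, mul_comm, mul_smul]; exact L0.smul_mem _ hn
      · rw [pow_add, mul_smul]; exact L0.smul_mem _ hm
  | smul b y _ hy =>
      obtain ⟨n, hn⟩ := hy
      obtain ⟨⟨a, s⟩, hs⟩ := IsLocalization.surj (nonZeroDivisors Bp) b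
      have hs0 : (s : Bp) ≠ 0 := nonZeroDivisors.coe_ne_zero s
      obtain ⟨k, u, hu⟩ := IsDiscreteValuationRing.eq_unit_mul_pow_irreducible hs0 ht
      refine ⟨n + k, ?_⟩
      have hsb : b * ((algebraMap Bp B) (u : Bp) * (algebraMap Bp B) (t ^ k))
          = algebraMap Bp B a := by
        rw [← map_mul, ← hu]; exact hs
      have hub : (algebraMap Bp B) ((u⁻¹ : Bpˣ) : Bp) * (algebraMap Bp B) (u : Bp) = 1 := by
        rw [← map_mul, ← Units.val_mul, inv_mul_cancel, Units.val_one, map_one]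
      have h1 : (algebraMap Bp B) (t ^ (n + k)) * b
          = (algebraMap Bp B) (((u⁻¹ : Bpˣ) : Bp) * a * t ^ n) := by
        simp only [map_mul, map_pow, pow_add] at hsb ⊢
        linear_combination ((algebraMap Bp B) ((u⁻¹ : Bpˣ) : Bp) * (algebraMap Bp B) t ^ n) * hsb
          - ((algebraMap Bp B) t ^ n * (algebraMap Bp B) t ^ k * b) * hub
      have h2 : t ^ (n + k) • (b • y) = (((u⁻¹ : Bpˣ) : Bp) * a) • (t ^ n • y) := by
        rw [← algebraMap_smul B (t ^ (n + k)) (b • y), smul_smul, h1, algebraMap_smul, mul_smul]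
      rw [h2]
      exact L0.smul_mem _ hn

lemma aux_exists_pow_le (t : Bp) (S T : Submodule Bp W) (hS : S.FG)
    (h : ∀ x : W, ∃ n : ℕ, t ^ n • x ∈ T) : ∃ n : ℕ, ∀ x ∈ S, t ^ n • x ∈ T := by
  classical
  obtain ⟨s, rfl⟩ := hS
  choose f hf using h
  refine ⟨s.sup f, ?_⟩
  intro x hx
  have key : Submodule.span Bp (s : Set W)
      ≤ Submodule.comap ((t ^ s.sup f) • (LinearMap.id : W →ₗ[Bp] W)) T := by
    rw [Submodule.span_le]
    intro y hy
    simp only [SetLike.mem_coe, Submodule.mem_comap, LinearMap.smul_apply, LinearMap.id_apply]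
    have hle : f y ≤ s.sup f := Finset.le_sup (Finset.mem_coe.mp hy)
    obtain ⟨d, hd⟩ := Nat.exists_eq_add_of_le hle
    rw [hd, pow_add, mul_comm, mul_smul]
    exact T.smul_mem _ (hf y)
  simpa using key hx

end Aux

/-- If the Bialynicki–Birula (trace) filtration induced by a `B⁺`-lattice `𝓛` on `V_C` is
trivial (`F⁰ V_C = V_C` and `F¹ V_C = 0`), then `𝓛` is the trivial lattice `V ⊗ B⁺`.
Here `B⁺` is a complete DVR with uniformizer `t` and fraction field `B`; `L0` plays the
role of the standard lattice `V ⊗_L B⁺` in `V ⊗_L B`, `V_C = L0 / t·L0`, and the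
filtration conditions are expressed at the level of submodules: `F⁰ = V_C` says
`(𝓛 ⊓ L0) + t•L0 = L0`, and `F¹ = 0` says `(t•𝓛) ⊓ L0 ≤ t•L0`. -/
theorem lattice_trivial_of_trace_filtration_trivial
    {Bp B W : Type*} [CommRing Bp] [IsDomain Bp] [IsDiscreteValuationRing Bp]
    [IsAdicComplete (IsLocalRing.maximalIdeal Bp) Bp]
    [Field B] [Algebra Bp B] [IsFractionRing Bp B]
    [AddCommGroup W] [Module B W] [Module Bp W] [IsScalarTower Bp B W]
    (t : Bp) (ht : Irreducible t)
    (L0 𝓛 : Submodule Bp W)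
    (hL0 : L0.FG ∧ Submodule.span B (L0 : Set W) = ⊤)
    (h𝓛 : 𝓛.FG ∧ Submodule.span B (𝓛 : Set W) = ⊤)
    (hF0 : (𝓛 ⊓ L0) ⊔ (t • L0) = L0)
    (hF1 : (t • 𝓛) ⊓ L0 ≤ t • L0) :
    𝓛 = L0 := by
  obtain ⟨hL0fg, hL0span⟩ := hL0
  obtain ⟨h𝓛fg, h𝓛span⟩ := h𝓛
  -- comparison powers
  obtain ⟨m, hm⟩ := aux_exists_pow_le t L0 𝓛 hL0fg
    (fun x => aux_exists_pow_smul_mem t ht 𝓛 x (by rw [h𝓛span]; trivial))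
  obtain ⟨n, hn⟩ := aux_exists_pow_le t 𝓛 L0 h𝓛fg
    (fun x => aux_exists_pow_smul_mem t ht L0 x (by rw [hL0span]; trivial))
  have smul_mono : ∀ (a : Bp) (S T : Submodule Bp W), S ≤ T → a • S ≤ a • T :=
    fun a S T h => Submodule.map_mono h
  -- Step 1 : L0 ≤ 𝓛
  have hiter : ∀ k : ℕ, L0 ≤ 𝓛 ⊔ (t ^ k • L0) := by
    intro k
    induction k with
    | zero => rw [pow_zero, one_smul]; exact le_sup_right
    | succ k IH =>
        calc L0 = (𝓛 ⊓ L0) ⊔ t • L0 := hF0.symm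
        _ ≤ 𝓛 ⊔ t • (𝓛 ⊔ t ^ k • L0) := sup_le_sup inf_le_left (smul_mono _ _ _ IH)
        _ = 𝓛 ⊔ (t • 𝓛 ⊔ t • (t ^ k • L0)) := by rw [Submodule.smul_sup']
        _ ≤ 𝓛 ⊔ t ^ (k + 1) • L0 := by
            rw [smul_smul, ← pow_succ']
            exact sup_le (le_sup_left)
              (sup_le (le_trans (Submodule.smul_le_self_of_tower t 𝓛) le_sup_left) le_sup_right)
  have hL0le : L0 ≤ 𝓛 := by
    refine le_trans (hiter m) (sup_le le_rfl ?_)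
    rintro x ⟨y, hy, rfl⟩
    exact hm y hy
  -- injectivity of smul by t
  have htB : (algebraMap Bp B) t ≠ 0 :=
    fun h => ht.ne_zero ((map_eq_zero_iff _ (IsFractionRing.injective Bp B)).mp h)
  have hinj : ∀ v w : W, t • v = t • w → v = w := by
    intro v w h
    rw [← algebraMap_smul B t v, ← algebraMap_smul B t w] at h
    calc v = ((algebraMap Bp B) t)⁻¹ • ((algebraMap Bp B) t • v) := (inv_smul_smul₀ htB v).symm
    _ = ((algebraMap Bp B) t)⁻¹ • ((algebraMap Bp B) t • w) := by rw [h]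
    _ = w := inv_smul_smul₀ htB w
  -- Step 2 : 𝓛 ≤ L0
  have claim : ∀ (k : ℕ) (x : W), x ∈ 𝓛 → t ^ k • x ∈ L0 → x ∈ L0 := by
    intro k
    induction k with
    | zero => intro x _ h; simpa using h
    | succ k IH =>
        intro x hx h
        have h1 : t • (t ^ k • x) ∈ (t • 𝓛) ⊓ L0 := by
          refine ⟨Submodule.smul_mem_pointwise_smul _ t 𝓛 (𝓛.smul_mem _ hx), ?_⟩
          rwa [smul_smul, ← pow_succ']
        obtain ⟨y, hy, hyeq⟩ := aux_mem_smul.mp (hF1 h1)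
        have := hinj _ _ hyeq
        exact IH x hx (this ▸ hy)
  have h𝓛le : 𝓛 ≤ L0 := fun x hx => claim n x hx (hn x hx)
  exact le_antisymm h𝓛le hL0le
end

section
/- Let B^+ be a complete DVR with uniformizer t and fraction field B. Let 0 → S → V → Q → 0 be a strict exact sequence of bilatticed B-vector spaces: i.e., S ⊆ V is a B-subspace with induced lattices 𝓛_i(S) = 𝓛_i(V) ∩ S, Q = V/S with quotient lattices, and the sequence of underlying vector spaces is exact. If the type of S ⊕ Q (as a multiset of elementary divisor exponents of the pair of lattices) is [μ] and the type of V is [ν], then [μ] ≤ [ν] in the dominance order: for every k, the sum of the k largest entries of [μ] is at most the sum of the k largest entries of [ν], with equality of total sums. -/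
/-- `(W, L1, L2)` has type `ν = (ν₁, …, νₙ)`: there is a simultaneous `B`-basis `b` of `W`
with `L1` the `R`-span of the `bᵢ` and `L2` the `R`-span of the `t^{νᵢ}·bᵢ`
(Smith normal form / elementary divisors). -/
def LatticePairHasType {R B W : Type*} [CommRing R] [Field B] [Algebra R B]
    [AddCommGroup W] [Module B W] [Module R W] [IsScalarTower R B W]
    (t : R) {n : ℕ} (ν : Fin n → ℤ) (L1 L2 : Submodule R W) : Prop :=
  ∃ b : Module.Basis (Fin n) B W,
    L1 = Submodule.span R (Set.range b) ∧
    L2 = Submodule.span R (Set.range fun i => ((algebraMap R B t) ^ (ν i)) • b i)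

namespace TypeDom

/-- Every strictly increasing chain that starts above `lo` and ends below `hi`
has length at most `p`. -/
def ChainBd {α : Type*} [Preorder α] (lo hi : α) (p : ℕ) : Prop :=
  ∀ (ℓ : ℕ) (f : Fin (ℓ + 1) → α), StrictMono f → lo ≤ f 0 → f (Fin.last ℓ) ≤ hi → ℓ ≤ p

theorem ChainBd.mono {α : Type*} [Preorder α] {lo hi : α} {p p' : ℕ}
    (h : ChainBd lo hi p) (hp : p ≤ p') : ChainBd lo hi p' :=
  fun ℓ f hf h0 h1 => (h ℓ f hf h0 h1).trans hp

theorem chainBd_self {α : Type*} [PartialOrder α] {lo hi : α} (h : hi ≤ lo) :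
    ChainBd lo hi 0 := by
  intro ℓ f hf h0 h1
  by_contra hc
  push_neg at hc
  have hlt : f 0 < f (Fin.last ℓ) := hf (by
    simp only [Fin.lt_iff_val_lt_val, Fin.val_zero, Fin.val_last]; omega)
  exact absurd (h1.trans (h.trans h0)) hlt.not_ge

theorem strictMono_snoc {n : ℕ} {α : Type*} [Preorder α] (f : Fin (n + 1) → α) (x : α)
    (hf : StrictMono f) (hx : f (Fin.last n) < x) : StrictMono (Fin.snoc f x) := by
  intro i j hij
  induction j using Fin.lastCases with
  | last =>
    have hi : i ≠ Fin.last (n + 1) := hij.ne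
    obtain ⟨i', rfl⟩ := Fin.exists_castSucc_eq.mpr hi
    rw [Fin.snoc_castSucc, Fin.snoc_last]
    exact lt_of_le_of_lt (hf.monotone (Fin.le_last i')) hx
  | cast j' =>
    have hi : i ≠ Fin.last (n + 1) := by
      intro h
      subst h
      exact absurd (lt_of_lt_of_le hij (Fin.le_last _)) (lt_irrefl _)
    obtain ⟨i', rfl⟩ := Fin.exists_castSucc_eq.mpr hi
    rw [Fin.snoc_castSucc, Fin.snoc_castSucc]
    exact hf (by exact_mod_cast hij)

theorem exists_two_chains {α : Type*} [Lattice α] [IsModularLattice α] (H : α) :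
    ∀ (ℓ : ℕ) (f : Fin (ℓ + 1) → α), StrictMono f →
      ∃ (a b : ℕ) (g : Fin (a + 1) → α) (h : Fin (b + 1) → α),
        StrictMono g ∧ StrictMono h ∧ ℓ ≤ a + b ∧
        g 0 = f 0 ⊓ H ∧ g (Fin.last a) = f (Fin.last ℓ) ⊓ H ∧
        h 0 = f 0 ⊔ H ∧ h (Fin.last b) = f (Fin.last ℓ) ⊔ H := by
  intro ℓ
  induction ℓ with
  | zero =>
    intro f hf
    refine ⟨0, 0, fun _ => f 0 ⊓ H, fun _ => f 0 ⊔ H, ?_, ?_, le_refl _, rfl, ?_, rfl, ?_⟩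
    · intro i j hij; exact absurd (Fin.lt_iff_val_lt_val.mp hij) (by omega)
    · intro i j hij; exact absurd (Fin.lt_iff_val_lt_val.mp hij) (by omega)
    · rw [Fin.last_zero]
    · rw [Fin.last_zero]
  | succ ℓ ih =>
    intro f hf
    obtain ⟨a, b, g, h, hg, hh, hab, hg0, hgl, hh0, hhl⟩ :=
      ih (f ∘ Fin.castSucc) (hf.comp Fin.strictMono_castSucc)
    simp only [Function.comp_apply, Fin.castSucc_zero] at hg0 hgl hh0 hhl
    have hyx : f (Fin.castSucc (Fin.last ℓ)) < f (Fin.last (ℓ + 1)) :=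
      hf (Fin.castSucc_lt_last _)
    have le1 := inf_le_inf_right H hyx.le
    have le2 := sup_le_sup_right hyx.le H
    rcases lt_or_eq_of_le le1 with k1 | k1 <;> rcases lt_or_eq_of_le le2 with k2 | k2
    · refine ⟨a + 1, b + 1, Fin.snoc g (f (Fin.last (ℓ + 1)) ⊓ H),
        Fin.snoc h (f (Fin.last (ℓ + 1)) ⊔ H),
        strictMono_snoc g _ hg (hgl ▸ k1), strictMono_snoc h _ hh (hhl ▸ k2), by omega,
        ?_, ?_, ?_, ?_⟩
      · rw [show (0 : Fin (a + 2)) = Fin.castSucc 0 from (Fin.castSucc_zero).symm,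
          Fin.snoc_castSucc]; exact hg0
      · simp
      · rw [show (0 : Fin (b + 2)) = Fin.castSucc 0 from (Fin.castSucc_zero).symm,
          Fin.snoc_castSucc]; exact hh0
      · simp
    · refine ⟨a + 1, b, Fin.snoc g (f (Fin.last (ℓ + 1)) ⊓ H), h,
        strictMono_snoc g _ hg (hgl ▸ k1), hh, by omega, ?_, ?_, hh0, by rw [hhl, k2]⟩
      · rw [show (0 : Fin (a + 2)) = Fin.castSucc 0 from (Fin.castSucc_zero).symm,
          Fin.snoc_castSucc]; exact hg0
      · simp
    · refine ⟨a, b + 1, g, Fin.snoc h (f (Fin.last (ℓ + 1)) ⊔ H),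
        hg, strictMono_snoc h _ hh (hhl ▸ k2), by omega, hg0, by rw [hgl, k1], ?_, ?_⟩
      · rw [show (0 : Fin (b + 2)) = Fin.castSucc 0 from (Fin.castSucc_zero).symm,
          Fin.snoc_castSucc]; exact hh0
      · simp
    · exact absurd (eq_of_le_of_inf_le_of_sup_le hyx.le k1.ge k2.ge) hyx.ne

theorem ChainBd.combine {α : Type*} [Lattice α] [IsModularLattice α] {lo hi H : α} {p q : ℕ}
    (hbg : ChainBd lo H p) (hbh : ChainBd H hi q) (hloH : lo ≤ H) (hHhi : H ≤ hi) :
    ChainBd lo hi (p + q) := by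
  intro ℓ f hf h0 h1
  obtain ⟨a, b, g, h, hg, hh, hab, hg0, hgl, hh0, hhl⟩ := exists_two_chains H ℓ f hf
  have ha : a ≤ p := hbg a g hg (hg0 ▸ le_inf h0 hloH) (hgl ▸ inf_le_right)
  have hb : b ≤ q := hbh b h hh (hh0 ▸ le_sup_right) (hhl ▸ sup_le h1 hHhi)
  omega

set_option linter.unusedSectionVars false

section Algebra

open Submodule Set

variable {R B W : Type*} [CommRing R] [IsDomain R] [IsDiscreteValuationRing R]
  [Field B] [Algebra R B] [IsFractionRing R B]
  [AddCommGroup W] [Module B W] [Module R W] [IsScalarTower R B W]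
  {t : R}

theorem u_ne_zero (ht : Irreducible t) : algebraMap R B t ≠ 0 :=
  (map_ne_zero_iff _ (IsFractionRing.injective R B)).mpr ht.ne_zero

theorem u_pow_eq (a : ℕ) : (algebraMap R B t) ^ (a : ℤ) = algebraMap R B (t ^ a) := by
  rw [zpow_natCast, map_pow]

theorem u_zpow_factor (ht : Irreducible t) {a b : ℤ} (hab : a ≤ b) :
    (algebraMap R B t) ^ b = t ^ (b - a).toNat • (algebraMap R B t) ^ a := by
  rw [Algebra.smul_def, ← u_pow_eq, ← zpow_add₀ (u_ne_zero ht)]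
  congr 1
  omega

theorem spanu_le (ht : Irreducible t) {a b : ℤ} (hab : a ≤ b) :
    Submodule.span R {(algebraMap R B t) ^ b} ≤ Submodule.span R {(algebraMap R B t) ^ a} := by
  rw [Submodule.span_singleton_le_iff_mem, u_zpow_factor ht hab]
  exact Submodule.smul_mem _ _ (Submodule.mem_span_singleton_self _)

theorem u_not_mem_span (ht : Irreducible t) {a b : ℤ} (hab : a < b) :
    (algebraMap R B t) ^ a ∉ Submodule.span R {(algebraMap R B t) ^ b} := by
  intro hmem
  obtain ⟨r, hr⟩ := Submodule.mem_span_singleton.mp hmem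
  rw [Algebra.smul_def] at hr
  rw [u_zpow_factor ht hab.le, Algebra.smul_def, ← mul_assoc] at hr
  have h2 : algebraMap R B (r * t ^ (b - a).toNat) = algebraMap R B 1 := by
    rw [map_one, map_mul]
    exact mul_right_cancel₀ (zpow_ne_zero _ (u_ne_zero ht)) (by simpa using hr)
  have h3 : r * t ^ (b - a).toNat = 1 := IsFractionRing.injective R B h2
  obtain ⟨e, he⟩ : ∃ e, (b - a).toNat = e + 1 := ⟨(b - a).toNat - 1, by omega⟩
  rw [he] at h3
  exact ht.not_isUnit (IsUnit.of_mul_eq_one (a := t) (t ^ e * r) (by rw [← h3]; ring))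

variable (R) in
/-- The submodule of elements whose `i`-th coordinate lies in `span R {c i}` for each `i`. -/
def coordSub {n : ℕ} (b : Module.Basis (Fin n) B W) (c : Fin n → B) : Submodule R W where
  carrier := {x | ∀ i, b.repr x i ∈ Submodule.span R {c i}}
  add_mem' := by
    intro x y hx hy i
    rw [map_add, Finsupp.add_apply]
    exact Submodule.add_mem _ (hx i) (hy i)
  zero_mem' := by intro i; simp
  smul_mem' := by
    intro r x hx i
    have hrs : b.repr (r • x) = r • b.repr x := map_smul (b.repr.restrictScalars R) r x
    rw [hrs, Finsupp.smul_apply]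
    exact Submodule.smul_mem _ _ (hx i)

theorem mem_coordSub {n : ℕ} {b : Module.Basis (Fin n) B W} {c : Fin n → B} {x : W} :
    x ∈ coordSub R b c ↔ ∀ i, b.repr x i ∈ Submodule.span R {c i} := Iff.rfl

theorem repr_smul_basis {n : ℕ} (b : Module.Basis (Fin n) B W) (s : B) (j i : Fin n) :
    b.repr (s • b j) i = if i = j then s else 0 := by
  rw [map_smul, b.repr_self, Finsupp.smul_apply, Finsupp.single_apply]
  by_cases h : j = i <;> simp [h, eq_comm]

theorem coordSub_eq_span {n : ℕ} (b : Module.Basis (Fin n) B W) (c : Fin n → B) :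
    Submodule.span R (Set.range fun i => c i • b i) = coordSub R b c := by
  apply le_antisymm
  · rw [Submodule.span_le]
    rintro x ⟨j, rfl⟩
    refine mem_coordSub.mpr fun i => ?_
    have hbeta : (fun i => c i • b i) j = c j • b j := rfl
    rw [hbeta, repr_smul_basis]
    by_cases h : i = j
    · simpa [h] using Submodule.mem_span_singleton_self (c i)
    · simp [h]
  · intro x hx
    choose r hr using fun i => Submodule.mem_span_singleton.mp (hx i)
    rw [← b.sum_repr x]
    refine Submodule.sum_mem _ fun i _ => ?_
    rw [← hr i, smul_assoc]
    exact Submodule.smul_mem _ _ (Submodule.subset_span ⟨i, rfl⟩)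

theorem span_scaled_inf (ht : Irreducible t) {n : ℕ} (b : Module.Basis (Fin n) B W) (ν ρ : Fin n → ℤ)
    (m : Fin n → ℤ) (hm : ∀ i, m i = max (ν i) (ρ i)) :
    (Submodule.span R (Set.range fun i => (algebraMap R B t) ^ ν i • b i) ⊓
      Submodule.span R (Set.range fun i => (algebraMap R B t) ^ ρ i • b i)) =
      Submodule.span R (Set.range fun i => (algebraMap R B t) ^ m i • b i) := by
  rw [coordSub_eq_span, coordSub_eq_span, coordSub_eq_span]
  ext x
  rw [Submodule.mem_inf, mem_coordSub, mem_coordSub, mem_coordSub]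
  have key : ∀ i : Fin n, (Submodule.span R {(algebraMap R B t) ^ ν i} ⊓
      Submodule.span R {(algebraMap R B t) ^ ρ i} : Submodule R B) =
      Submodule.span R {(algebraMap R B t) ^ m i} := by
    intro i
    rcases le_total (ν i) (ρ i) with h | h
    · rw [hm i, max_eq_right h, inf_eq_right.mpr (spanu_le ht h)]
    · rw [hm i, max_eq_left h, inf_eq_left.mpr (spanu_le ht h)]
  constructor
  · rintro ⟨h1, h2⟩ i
    rw [← key i]
    exact Submodule.mem_inf.mpr ⟨h1 i, h2 i⟩
  · intro h
    have h' : ∀ i, b.repr x i ∈ (Submodule.span R {(algebraMap R B t) ^ ν i} ⊓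
        Submodule.span R {(algebraMap R B t) ^ ρ i} : Submodule R B) := by
      intro i
      rw [key i]
      exact h i
    exact ⟨fun i => (Submodule.mem_inf.mp (h' i)).1, fun i => (Submodule.mem_inf.mp (h' i)).2⟩

theorem span_scaled_mono (ht : Irreducible t) {n : ℕ} (b : Module.Basis (Fin n) B W)
    {c c' : Fin n → ℤ} (hle : ∀ i, c' i ≤ c i) :
    Submodule.span R (Set.range fun i => (algebraMap R B t) ^ c i • b i) ≤
      Submodule.span R (Set.range fun i => (algebraMap R B t) ^ c' i • b i) := by
  rw [Submodule.span_le]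
  rintro x ⟨j, rfl⟩
  have : (fun i => (algebraMap R B t) ^ c i • b i) j =
      t ^ (c j - c' j).toNat • ((algebraMap R B t) ^ c' j • b j) := by
    show (algebraMap R B t) ^ c j • b j = _
    rw [u_zpow_factor ht (hle j), smul_assoc]
  rw [this]
  exact Submodule.smul_mem _ _ (Submodule.subset_span ⟨j, rfl⟩)

theorem span_scaled_lt (ht : Irreducible t) {n : ℕ} (b : Module.Basis (Fin n) B W)
    {c c' : Fin n → ℤ} (hle : ∀ i, c' i ≤ c i) (i₀ : Fin n) (hlt : c' i₀ < c i₀) :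
    Submodule.span R (Set.range fun i => (algebraMap R B t) ^ c i • b i) <
      Submodule.span R (Set.range fun i => (algebraMap R B t) ^ c' i • b i) := by
  refine lt_of_le_of_ne (span_scaled_mono ht b hle) fun heq => ?_
  have hmem : (algebraMap R B t) ^ c' i₀ • b i₀ ∈
      Submodule.span R (Set.range fun i => (algebraMap R B t) ^ c i • b i) := by
    rw [heq]
    exact Submodule.subset_span ⟨i₀, rfl⟩
  rw [coordSub_eq_span, mem_coordSub] at hmem
  have := hmem i₀
  rw [repr_smul_basis, if_pos rfl] at this
  exact u_not_mem_span ht hlt this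

theorem pow_mem_span_pow_iff (ht : Irreducible t) {a c : ℕ} :
    t ^ a ∈ Ideal.span {t ^ c} ↔ c ≤ a := by
  rw [Ideal.mem_span_singleton]
  constructor
  · intro h
    by_contra hc
    push_neg at hc
    obtain ⟨r, hr⟩ := h
    obtain ⟨e, he⟩ : ∃ e, c = a + (e + 1) := ⟨c - a - 1, by omega⟩
    rw [he, pow_add] at hr
    have h1 : (1 : R) = t ^ (e + 1) * r :=
      mul_left_cancel₀ (pow_ne_zero a ht.ne_zero)
        (by linear_combination hr : t ^ a * 1 = t ^ a * (t ^ (e + 1) * r))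
    exact ht.not_isUnit (IsUnit.of_mul_eq_one (a := t) (t ^ e * r) (by rw [← mul_assoc, ← pow_succ']; exact h1.symm))
  · intro h
    exact pow_dvd_pow t h

theorem chainBd_single {n : ℕ} (ht : Irreducible t) (b : Module.Basis (Fin n) B W) (i₀ : Fin n) (c₀ : ℕ) :
    ChainBd (Submodule.span R
        (Set.range fun i => if i = i₀ then ((algebraMap R B t) ^ (c₀ : ℤ)) • b i else b i))
      (Submodule.span R (Set.range b)) c₀ := by
  intro ℓ f hf h0 h1
  set H := Submodule.span R
      (Set.range fun i => if i = i₀ then ((algebraMap R B t) ^ (c₀ : ℤ)) • b i else b i) with hH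
  set ts : R →ₗ[R] W := LinearMap.toSpanSingleton R W (b i₀) with hts
  set J : Fin (ℓ + 1) → Ideal R := fun j => Submodule.comap ts (f j) with hJ
  -- each f j decomposes
  have hfle : ∀ j, f j ≤ Submodule.span R (Set.range b) :=
    fun j => le_trans (hf.monotone (Fin.le_last j)) h1
  have hfge : ∀ j, H ≤ f j := fun j => le_trans h0 (hf.monotone (Fin.zero_le j))
  have claim : ∀ j, f j = H ⊔ Submodule.map ts (J j) := by
    intro j
    apply le_antisymm
    · intro x hx
      obtain ⟨r, hr⟩ := mem_span_range_iff_exists_fun R |>.mp (hfle j hx)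
      have hsplit : r i₀ • b i₀ + ∑ i ∈ Finset.univ.erase i₀, r i • b i = x :=
        (Finset.add_sum_erase Finset.univ (fun i => r i • b i) (Finset.mem_univ i₀)).trans hr
      have hrest : ∑ i ∈ Finset.univ.erase i₀, r i • b i ∈ H := by
        refine Submodule.sum_mem _ fun i hi => ?_
        refine Submodule.smul_mem _ _ (Submodule.subset_span ⟨i, ?_⟩)
        show (if i = i₀ then ((algebraMap R B t) ^ (c₀ : ℤ)) • b i else b i) = b i
        rw [if_neg (Finset.ne_of_mem_erase hi)]
      have hri : r i₀ • b i₀ ∈ f j := by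
        rw [eq_sub_of_add_eq hsplit]
        exact Submodule.sub_mem _ hx (hfge j hrest)
      have : x = (∑ i ∈ Finset.univ.erase i₀, r i • b i) + r i₀ • b i₀ := by
        rw [← hsplit]; abel
      rw [this]
      exact Submodule.add_mem _ (Submodule.mem_sup_left hrest)
        (Submodule.mem_sup_right ⟨r i₀, hri, rfl⟩)
    · exact sup_le (hfge j) (le_trans (Submodule.map_comap_le _ _) (le_refl _))
  -- the ideals are strictly increasing, nonzero, contain t^c₀
  have htc : ∀ j, t ^ c₀ ∈ J j := by
    intro j
    refine hfge j ?_
    show (t ^ c₀) • b i₀ ∈ H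
    have : (t ^ c₀) • b i₀ = ((algebraMap R B t) ^ (c₀ : ℤ)) • b i₀ := by
      rw [u_pow_eq, algebraMap_smul]
    rw [this]
    refine Submodule.subset_span ⟨i₀, ?_⟩
    show (if i₀ = i₀ then ((algebraMap R B t) ^ (c₀ : ℤ)) • b i₀ else b i₀) = _
    rw [if_pos rfl]
  have hJne : ∀ j, J j ≠ ⊥ := by
    intro j hbot
    have := htc j
    rw [hbot, Submodule.mem_bot] at this
    exact pow_ne_zero c₀ ht.ne_zero this
  choose e he using fun j => IsDiscreteValuationRing.ideal_eq_span_pow_irreducible (hJne j) ht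
  have hJmono : StrictMono J := by
    intro j j' hjj
    refine lt_of_le_of_ne (Submodule.comap_mono (hf hjj).le) fun heq => ?_
    have : f j = f j' := by rw [claim j, claim j', hJ] at *; rw [heq]
    exact (hf hjj).ne this
  have hemono : ∀ {j j'}, j < j' → e j' < e j := by
    intro j j' hjj
    have hlt := hJmono hjj
    rw [he j, he j'] at hlt
    have hle : e j' ≤ e j := by
      have := hlt.le (Ideal.subset_span (Set.mem_singleton _))
      exact (pow_mem_span_pow_iff ht).mp this
    rcases lt_or_eq_of_le hle with h | h
    · exact h
    · exact absurd (by rw [h]) hlt.ne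
  have he0 : e 0 ≤ c₀ := by
    have := htc 0
    rw [he 0] at this
    exact (pow_mem_span_pow_iff ht).mp this
  -- conclude by cardinality
  have hinj : Function.Injective (fun j : Fin (ℓ + 1) => (⟨e j, by
      rcases eq_or_lt_of_le (Fin.zero_le j) with h | h
      · rw [← h]; omega
      · have := hemono h; omega⟩ : Fin (c₀ + 1))) := by
    intro j j' hjj
    rcases lt_trichotomy j j' with h | h | h
    · exact absurd (congrArg Fin.val hjj) (by have := hemono h; simp; omega)
    · exact h
    · exact absurd (congrArg Fin.val hjj) (by have := hemono h; simp; omega)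
  have := Fintype.card_le_of_injective _ hinj
  simpa using this

theorem span_scaled_le_self (ht : Irreducible t) {n : ℕ} (b : Module.Basis (Fin n) B W)
    (c : Fin n → ℤ) (hc : ∀ i, 0 ≤ c i) :
    Submodule.span R (Set.range fun i => (algebraMap R B t) ^ c i • b i) ≤
      Submodule.span R (Set.range b) := by
  have h := span_scaled_mono ht b (c := c) (c' := fun _ => (0 : ℤ)) hc
  simpa using h

theorem strictMono_cons {n : ℕ} {α : Type*} [Preorder α] (f : Fin (n + 1) → α) (x : α)
    (hf : StrictMono f) (hx : x < f 0) : StrictMono (Fin.cons x f) := by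
  intro i j hij
  induction i using Fin.cases with
  | zero =>
    induction j using Fin.cases with
    | zero => exact absurd hij (lt_irrefl _)
    | succ j' =>
      rw [Fin.cons_zero, Fin.cons_succ]
      exact lt_of_lt_of_le hx (hf.monotone (Fin.zero_le j'))
  | succ i' =>
    induction j using Fin.cases with
    | zero => exact absurd hij (Fin.not_lt_zero _)
    | succ j' =>
      rw [Fin.cons_succ, Fin.cons_succ]
      exact hf (Fin.succ_lt_succ_iff.mp hij)

theorem chainBd_span (ht : Irreducible t) :
    ∀ (N : ℕ) {n : ℕ} (b : Module.Basis (Fin n) B W) (c : Fin n → ℕ), (∑ i, c i) ≤ N →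
      ChainBd (Submodule.span R (Set.range fun i => (algebraMap R B t) ^ (c i : ℤ) • b i))
        (Submodule.span R (Set.range b)) (∑ i, c i) := by
  intro N
  induction N with
  | zero =>
    intro n b c hc
    have hc0 := Finset.sum_eq_zero_iff.mp (Nat.le_zero.mp hc)
    have hgen : (fun i => (algebraMap R B t) ^ (c i : ℤ) • b i) = fun i => b i := by
      funext i
      rw [hc0 i (Finset.mem_univ i)]
      simp
    rw [hgen, Nat.le_zero.mp hc]
    exact chainBd_self (le_of_eq rfl)
  | succ N ih =>
    intro n b c hc
    rcases Nat.lt_or_ge N (∑ i, c i) with hgt | hle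
    swap
    · exact ih b c hle
    obtain ⟨i₀, -, hi₀⟩ := Finset.exists_ne_zero_of_sum_ne_zero
      (f := c) (by omega : (∑ i, c i) ≠ 0)
    have hwu : ∀ i : Fin n, IsUnit (if i = i₀ then (algebraMap R B t) ^ (c i₀ : ℤ) else 1) := by
      intro i
      by_cases h : i = i₀
      · rw [if_pos h]
        exact isUnit_iff_ne_zero.mpr (zpow_ne_zero _ (u_ne_zero ht))
      · rw [if_neg h]; exact isUnit_one
    set b' := b.isUnitSMul hwu with hb'
    have hb'app : ∀ i, b' i = (if i = i₀ then (algebraMap R B t) ^ (c i₀ : ℤ) else 1) • b i :=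
      fun i => Module.Basis.isUnitSMul_apply hwu i
    set c' : Fin n → ℕ := fun i => if i = i₀ then 0 else c i with hc'
    have hgen : (fun i => (algebraMap R B t) ^ (c' i : ℤ) • b' i) =
        (fun i => (algebraMap R B t) ^ (c i : ℤ) • b i) := by
      funext i
      rw [hb'app i]
      by_cases h : i = i₀
      · subst h
        simp [hc']
      · simp [hc', h]
    have hsum : ∑ i, c' i + c i₀ = ∑ i, c i := by
      have h1 : ∑ i, c' i = ∑ i ∈ Finset.univ.erase i₀, c i := by
        rw [← Finset.add_sum_erase _ c' (Finset.mem_univ i₀)]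
        have : c' i₀ = 0 := by simp [hc']
        rw [this, zero_add]
        exact Finset.sum_congr rfl fun i hi => by simp [hc', Finset.ne_of_mem_erase hi]
      have h2 : c i₀ + ∑ i ∈ Finset.univ.erase i₀, c i = ∑ i, c i :=
        Finset.add_sum_erase _ c (Finset.mem_univ i₀)
      omega
    have hH : Submodule.span R (Set.range b') =
        Submodule.span R (Set.range fun i =>
          if i = i₀ then ((algebraMap R B t) ^ (c i₀ : ℤ)) • b i else b i) := by
      have : ⇑b' = fun i => if i = i₀ then ((algebraMap R B t) ^ (c i₀ : ℤ)) • b i else b i := by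
        funext i
        rw [hb'app i]
        by_cases h : i = i₀ <;> simp [h]
      rw [this]
    have hbd1 : ChainBd
        (Submodule.span R (Set.range fun i => (algebraMap R B t) ^ (c i : ℤ) • b i))
        (Submodule.span R (Set.range b')) (∑ i, c' i) := by
      rw [← hgen]
      exact ih b' c' (by omega)
    have hbd2 : ChainBd (Submodule.span R (Set.range b'))
        (Submodule.span R (Set.range b)) (c i₀) := by
      rw [hH]
      exact chainBd_single ht b i₀ (c i₀)
    have hloH : Submodule.span R (Set.range fun i => (algebraMap R B t) ^ (c i : ℤ) • b i) ≤
        Submodule.span R (Set.range b') := by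
      rw [← hgen]
      exact span_scaled_le_self ht b' _ (fun i => by positivity)
    have hHhi : Submodule.span R (Set.range b') ≤ Submodule.span R (Set.range b) := by
      rw [hH]
      have : (fun i => if i = i₀ then ((algebraMap R B t) ^ (c i₀ : ℤ)) • b i else b i) =
          (fun i => (algebraMap R B t) ^ ((if i = i₀ then (c i₀ : ℤ) else 0)) • b i) := by
        funext i
        by_cases h : i = i₀ <;> simp [h]
      rw [this]
      exact span_scaled_le_self ht b _ (fun i => by by_cases h : i = i₀ <;> simp [h])
    exact (hbd1.combine hbd2 hloH hHhi).mono (by omega)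

theorem exists_chain_span (ht : Irreducible t) :
    ∀ (N : ℕ) {n : ℕ} (b : Module.Basis (Fin n) B W) (c : Fin n → ℕ), (∑ i, c i) = N →
      ∃ f : Fin (N + 1) → Submodule R W, StrictMono f ∧
        f 0 = Submodule.span R (Set.range fun i => (algebraMap R B t) ^ (c i : ℤ) • b i) ∧
        f (Fin.last N) = Submodule.span R (Set.range b) := by
  intro N
  induction N with
  | zero =>
    intro n b c hc
    have hc0 := Finset.sum_eq_zero_iff.mp hc
    refine ⟨fun _ => Submodule.span R (Set.range b),
      fun i j hij => absurd (Fin.lt_iff_val_lt_val.mp hij) (by omega), ?_, rfl⟩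
    have hgen : (fun i => (algebraMap R B t) ^ (c i : ℤ) • b i) = fun i => b i := by
      funext i
      rw [hc0 i (Finset.mem_univ i)]
      simp
    rw [hgen]
  | succ N ih =>
    intro n b c hc
    obtain ⟨i₀, -, hi₀⟩ := Finset.exists_ne_zero_of_sum_ne_zero
      (f := c) (by omega : (∑ i, c i) ≠ 0)
    set c' : Fin n → ℕ := fun i => if i = i₀ then c i₀ - 1 else c i with hc'
    have hsum' : ∑ i, c' i = N := by
      have h1 : ∑ i, c' i = c' i₀ + ∑ i ∈ Finset.univ.erase i₀, c' i :=
        (Finset.add_sum_erase _ c' (Finset.mem_univ i₀)).symm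
      have h2 : c i₀ + ∑ i ∈ Finset.univ.erase i₀, c i = ∑ i, c i :=
        Finset.add_sum_erase _ c (Finset.mem_univ i₀)
      have h3 : ∑ i ∈ Finset.univ.erase i₀, c' i = ∑ i ∈ Finset.univ.erase i₀, c i :=
        Finset.sum_congr rfl fun i hi => by simp [hc', Finset.ne_of_mem_erase hi]
      have h4 : c' i₀ = c i₀ - 1 := by simp [hc']
      omega
    obtain ⟨f', hf', h0', hl'⟩ := ih b c' hsum'
    have hlt : Submodule.span R (Set.range fun i => (algebraMap R B t) ^ (c i : ℤ) • b i) <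
        Submodule.span R (Set.range fun i => (algebraMap R B t) ^ (c' i : ℤ) • b i) := by
      refine span_scaled_lt ht b (fun i => ?_) i₀ ?_
      · by_cases h : i = i₀
        · subst h
          simp only [hc', if_pos rfl]
          omega
        · simp [hc', h]
      · simp only [hc', if_pos rfl]
        omega
    refine ⟨Fin.cons (Submodule.span R
        (Set.range fun i => (algebraMap R B t) ^ (c i : ℤ) • b i)) f',
      strictMono_cons f' _ hf' (by rw [h0']; exact hlt), by rw [Fin.cons_zero], ?_⟩
    rw [← Fin.succ_last, Fin.cons_succ]
    exact hl'

theorem span_range_congr {ι : Type*} {f g : ι → W} (h : ∀ i, f i = g i) :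
    Submodule.span R (Set.range f) = Submodule.span R (Set.range g) := by
  rw [funext h]

theorem inf_lattice_eq (ht : Irreducible t) {n : ℕ} (b : Module.Basis (Fin n) B W) (ν : Fin n → ℤ) :
    Submodule.span R (Set.range b) ⊓
      Submodule.span R (Set.range fun i => (algebraMap R B t) ^ ν i • b i) =
      Submodule.span R (Set.range fun i => (algebraMap R B t) ^ (((ν i).toNat : ℕ) : ℤ) • b i) := by
  rw [span_range_congr (g := fun i => (algebraMap R B t) ^ ((fun _ : Fin n => (0 : ℤ)) i) • b i)
    (fun i => by simp)]
  exact span_scaled_inf ht b _ ν _ (fun i => by rw [Int.toNat_eq_max, max_comm])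

theorem main0 {n s q : ℕ} (ht : Irreducible t) (S : Submodule B W) (L1 L2 : Submodule R W)
    (σ : Fin s → ℤ) (τ : Fin q → ℤ) (ν : Fin n → ℤ)
    (hS : LatticePairHasType (B := B) t σ (L1.comap (S.subtype.restrictScalars R))
        (L2.comap (S.subtype.restrictScalars R)))
    (hQ : LatticePairHasType (B := B) t τ (Submodule.map (S.mkQ.restrictScalars R) L1)
        (Submodule.map (S.mkQ.restrictScalars R) L2))
    (hV : LatticePairHasType (B := B) t ν L1 L2) :
    ((∑ i, (σ i).toNat) + ∑ i, (τ i).toNat) ≤ ∑ i, (ν i).toNat := by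
  obtain ⟨bS, hS1, hS2⟩ := hS
  obtain ⟨bQ, hQ1, hQ2⟩ := hQ
  obtain ⟨bV, hV1, hV2⟩ := hV
  set ι : ↥S →ₗ[R] W := S.subtype.restrictScalars R with hι
  set π : W →ₗ[R] (W ⧸ S) := S.mkQ.restrictScalars R with hπ
  set a := ∑ i, (σ i).toNat with ha
  set bb := ∑ i, (τ i).toNat with hbb
  obtain ⟨fS, hfS, hfS0, hfSl⟩ :=
    exists_chain_span ht a bS (fun i => (σ i).toNat) ha.symm
  obtain ⟨fQ, hfQ, hfQ0, hfQl⟩ :=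
    exists_chain_span ht bb bQ (fun i => (τ i).toNat) hbb.symm
  have hfS0' : fS 0 = Submodule.comap ι L1 ⊓ Submodule.comap ι L2 := by
    rw [hfS0, hS1, hS2, inf_lattice_eq ht bS σ]
  have hfSl' : fS (Fin.last a) = Submodule.comap ι L1 := by rw [hfSl, hS1]
  have hfQ0' : fQ 0 = Submodule.map π L1 ⊓ Submodule.map π L2 := by
    rw [hfQ0, hQ1, hQ2, inf_lattice_eq ht bQ τ]
  have hfQl' : fQ (Fin.last bb) = Submodule.map π L1 := by rw [hfQl, hQ1]
  have hιinj : Function.Injective ι := fun x y hxy => Subtype.coe_injective hxy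
  set X : Fin (a + 1) → Submodule R W := fun r => (L1 ⊓ L2) ⊔ Submodule.map ι (fS r) with hX
  have hXinf : ∀ r, X r ⊓ LinearMap.range ι = Submodule.map ι (fS r) := by
    intro r
    show ((L1 ⊓ L2) ⊔ Submodule.map ι (fS r)) ⊓ LinearMap.range ι = Submodule.map ι (fS r)
    have h1 : Submodule.map ι (fS r) ≤ LinearMap.range ι := LinearMap.map_le_range
    rw [sup_comm, sup_inf_assoc_of_le _ h1]
    have h2 : (L1 ⊓ L2) ⊓ LinearMap.range ι = Submodule.map ι (Submodule.comap ι (L1 ⊓ L2)) := by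
      rw [Submodule.map_comap_eq, inf_comm]
    rw [h2, Submodule.comap_inf, ← hfS0']
    exact sup_eq_left.mpr (Submodule.map_mono (hfS.monotone (Fin.zero_le r)))
  have hXmono : StrictMono X := by
    intro r r' hrr
    refine lt_of_le_of_ne (sup_le_sup_left (Submodule.map_mono (hfS hrr).le) _) fun heq => ?_
    have h3 := congrArg (fun Z => Z ⊓ LinearMap.range ι) heq
    rw [hXinf r, hXinf r'] at h3
    exact (hfS hrr).ne (Submodule.map_injective_of_injective hιinj h3)
  have hmic : ∀ (X' : Submodule R W) (Z : Submodule R (W ⧸ S)),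
      Submodule.map π (X' ⊓ Submodule.comap π Z) = Submodule.map π X' ⊓ Z := by
    intro X' Z
    apply le_antisymm
    · refine le_inf (Submodule.map_mono inf_le_left) ?_
      rw [Submodule.map_le_iff_le_comap]
      exact inf_le_right
    · rintro y hy
      rw [Submodule.mem_inf] at hy
      obtain ⟨⟨x, hx, rfl⟩, hy2⟩ := hy
      exact ⟨x, Submodule.mem_inf.mpr ⟨hx, hy2⟩, rfl⟩
  set Y : Fin (bb + 1) → Submodule R W := fun j => L1 ⊓ Submodule.comap π (fQ j) with hY
  have hYmap : ∀ j, Submodule.map π (Y j) = fQ j := by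
    intro j
    show Submodule.map π (L1 ⊓ Submodule.comap π (fQ j)) = fQ j
    rw [hmic]
    refine inf_eq_right.mpr ?_
    rw [← hfQl']
    exact hfQ.monotone (Fin.le_last j)
  have hYmono : StrictMono Y := by
    intro j j' hjj
    refine lt_of_le_of_ne (inf_le_inf_left _ (Submodule.comap_mono (hfQ hjj).le)) fun heq => ?_
    have h3 := congrArg (Submodule.map π) heq
    rw [hYmap j, hYmap j'] at h3
    exact (hfQ hjj).ne h3
  have hjunc : X (Fin.last a) ≤ Y 0 := by
    show (L1 ⊓ L2) ⊔ Submodule.map ι (fS (Fin.last a)) ≤ L1 ⊓ Submodule.comap π (fQ 0)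
    rw [hfSl', hfQ0']
    refine sup_le (le_inf inf_le_left ?_) (le_inf ?_ ?_)
    · rw [Submodule.comap_inf]
      exact le_inf (le_trans inf_le_left (Submodule.le_comap_map π L1))
        (le_trans inf_le_right (Submodule.le_comap_map π L2))
    · exact Submodule.map_comap_le ι L1
    · rintro x ⟨y, hy, rfl⟩
      have hz : π (ι y) = 0 := by
        rw [hπ, hι]
        simp only [LinearMap.restrictScalars_apply, Submodule.mkQ_apply]
        exact (Submodule.Quotient.mk_eq_zero S).mpr y.2
      rw [Submodule.mem_comap, hz]
      exact Submodule.zero_mem _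
  set F : Fin (a + bb + 1) → Submodule R W := fun j =>
    if h : (j : ℕ) ≤ a then X ⟨j, by omega⟩
    else Y ⟨(j : ℕ) - a, by have := j.isLt; omega⟩ with hF
  have hFmono : StrictMono F := by
    intro i j hij
    have hij' : (i : ℕ) < (j : ℕ) := hij
    show F i < F j
    simp only [hF]
    by_cases hi : (i : ℕ) ≤ a <;> by_cases hj : (j : ℕ) ≤ a
    · rw [dif_pos hi, dif_pos hj]
      exact hXmono (by rw [Fin.lt_iff_val_lt_val]; exact hij')
    · rw [dif_pos hi, dif_neg hj]
      have h1 : X ⟨(i : ℕ), by omega⟩ ≤ X (Fin.last a) :=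
        hXmono.monotone (by rw [Fin.le_iff_val_le_val]; simpa using hi)
      refine lt_of_le_of_lt (h1.trans hjunc) (hYmono ?_)
      rw [Fin.lt_iff_val_lt_val]
      show 0 < (j : ℕ) - a
      omega
    · exact absurd hij' (by omega)
    · rw [dif_neg hi, dif_neg hj]
      exact hYmono (by rw [Fin.lt_iff_val_lt_val]; show (i:ℕ) - a < (j:ℕ) - a; omega)
  have hF0 : L1 ⊓ L2 ≤ F 0 := by
    show L1 ⊓ L2 ≤ F 0
    simp only [hF]
    rw [dif_pos (by simp : ((0 : Fin (a + bb + 1)) : ℕ) ≤ a)]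
    exact le_sup_left
  have hFl : F (Fin.last (a + bb)) ≤ L1 := by
    simp only [hF]
    by_cases h : ((Fin.last (a + bb) : Fin (a + bb + 1)) : ℕ) ≤ a
    · rw [dif_pos h]
      refine sup_le inf_le_left ?_
      refine le_trans (Submodule.map_mono (hfS.monotone (Fin.le_last _))) ?_
      rw [hfSl']
      exact Submodule.map_comap_le ι L1
    · rw [dif_neg h]
      exact inf_le_left
  have hub : ChainBd (L1 ⊓ L2) L1 (∑ i, (ν i).toNat) := by
    have hchain := chainBd_span ht (∑ i, (ν i).toNat) bV (fun i => (ν i).toNat) le_rfl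
    rw [hV1, hV2, inf_lattice_eq ht bV ν]
    exact hchain
  exact hub (a + bb) F hFmono hF0 hFl

variable (R) in
/-- Scaling by a nonzero element of `B` as an `R`-linear automorphism. -/
def scaleEquiv {V : Type*} [AddCommGroup V] [Module B V] [Module R V] [IsScalarTower R B V]
    (z : B) (hz : z ≠ 0) : V ≃ₗ[R] V where
  toFun x := z • x
  invFun x := z⁻¹ • x
  map_add' x y := smul_add z x y
  map_smul' r x := by
    simp only [RingHom.id_apply]
    rw [← algebraMap_smul B r x, ← algebraMap_smul B r (z • x), smul_smul, smul_smul, mul_comm]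
  left_inv x := by simp only; rw [smul_smul, inv_mul_cancel₀ hz, one_smul]
  right_inv x := by simp only; rw [smul_smul, mul_inv_cancel₀ hz, one_smul]

theorem scaleEquiv_apply {V : Type*} [AddCommGroup V] [Module B V] [Module R V]
    [IsScalarTower R B V] (z : B) (hz : z ≠ 0) (x : V) : scaleEquiv R z hz x = z • x := rfl

theorem map_scale_span {V : Type*} [AddCommGroup V] [Module B V] [Module R V]
    [IsScalarTower R B V] (z : B) (hz : z ≠ 0) {k : ℕ} (v : Fin k → V) :
    Submodule.map ((scaleEquiv R z hz : V ≃ₗ[R] V) : V →ₗ[R] V)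
        (Submodule.span R (Set.range v)) =
      Submodule.span R (Set.range fun i => z • v i) := by
  rw [Submodule.map_span, ← Set.range_comp]
  rfl

theorem comap_scale_comm (S : Submodule B W) (z : B) (hz : z ≠ 0) (L : Submodule R W) :
    Submodule.comap (S.subtype.restrictScalars R)
        (Submodule.map ((scaleEquiv R z hz : W ≃ₗ[R] W) : W →ₗ[R] W) L) =
      Submodule.map ((scaleEquiv R z hz : ↥S ≃ₗ[R] ↥S) : ↥S →ₗ[R] ↥S)
        (Submodule.comap (S.subtype.restrictScalars R) L) := by
  ext x
  rw [Submodule.mem_comap, Submodule.mem_map, Submodule.mem_map]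
  constructor
  · rintro ⟨w, hw, hwx⟩
    refine ⟨z⁻¹ • x, ?_, ?_⟩
    · rw [Submodule.mem_comap]
      have hxw : (S.subtype.restrictScalars R) (z⁻¹ • x) = w := by
        show ((z⁻¹ • x : ↥S) : W) = w
        have : ((z⁻¹ • x : ↥S) : W) = z⁻¹ • (x : W) := rfl
        rw [this]
        have hwx' : z • w = ((x : ↥S) : W) := hwx
        rw [← hwx', smul_smul, inv_mul_cancel₀ hz, one_smul]
      rw [hxw]
      exact hw
    · show z • (z⁻¹ • x) = x
      rw [smul_smul, mul_inv_cancel₀ hz, one_smul]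
  · rintro ⟨y, hy, rfl⟩
    refine ⟨(S.subtype.restrictScalars R) y, hy, ?_⟩
    show z • ((y : ↥S) : W) = ((z • y : ↥S) : W)
    rfl

theorem map_scale_comm (S : Submodule B W) (z : B) (hz : z ≠ 0) (L : Submodule R W) :
    Submodule.map (S.mkQ.restrictScalars R)
        (Submodule.map ((scaleEquiv R z hz : W ≃ₗ[R] W) : W →ₗ[R] W) L) =
      Submodule.map ((scaleEquiv R z hz : (W ⧸ S) ≃ₗ[R] (W ⧸ S)) : (W ⧸ S) →ₗ[R] (W ⧸ S))
        (Submodule.map (S.mkQ.restrictScalars R) L) := by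
  rw [← Submodule.map_comp, ← Submodule.map_comp]
  congr 1

theorem type_swap {n : ℕ} (ht : Irreducible t) {V : Type*} [AddCommGroup V] [Module B V]
    [Module R V] [IsScalarTower R B V] {L1 L2 : Submodule R V} {ν : Fin n → ℤ}
    (h : LatticePairHasType (B := B) t ν L1 L2) :
    LatticePairHasType (B := B) t (fun i => -ν i) L2 L1 := by
  obtain ⟨b, h1, h2⟩ := h
  have hwu : ∀ i, IsUnit ((algebraMap R B t) ^ (ν i)) :=
    fun i => isUnit_iff_ne_zero.mpr (zpow_ne_zero _ (u_ne_zero ht))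
  refine ⟨b.isUnitSMul hwu, ?_, ?_⟩
  · rw [h2]
    exact span_range_congr fun i => (Module.Basis.isUnitSMul_apply hwu i).symm
  · rw [h1]
    refine span_range_congr fun i => ?_
    rw [Module.Basis.isUnitSMul_apply hwu i, smul_smul, ← zpow_add₀ (u_ne_zero ht)]
    simp

theorem smul_merge {V : Type*} [AddCommGroup V] [Module B V] [Module R V] [IsScalarTower R B V]
    (ht : Irreducible t) (m : ℤ) (x : V) (e : ℤ) :
    ((algebraMap R B t) ^ (-m) : B) • ((algebraMap R B t) ^ e • x) =
      (algebraMap R B t) ^ (e - m) • x := by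
  rw [smul_smul, ← zpow_add₀ (u_ne_zero ht), show -m + e = e - m by omega]

theorem core_ineq {n s q : ℕ} (ht : Irreducible t) (S : Submodule B W) (L1 L2 : Submodule R W)
    (σ : Fin s → ℤ) (τ : Fin q → ℤ) (ν : Fin n → ℤ)
    (hS : LatticePairHasType (B := B) t σ (L1.comap (S.subtype.restrictScalars R))
        (L2.comap (S.subtype.restrictScalars R)))
    (hQ : LatticePairHasType (B := B) t τ (Submodule.map (S.mkQ.restrictScalars R) L1)
        (Submodule.map (S.mkQ.restrictScalars R) L2))
    (hV : LatticePairHasType (B := B) t ν L1 L2) (m : ℤ) :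
    ((∑ i, (σ i - m).toNat) + ∑ i, (τ i - m).toNat) ≤ ∑ i, (ν i - m).toNat := by
  have hz : ((algebraMap R B t) ^ (-m) : B) ≠ 0 := zpow_ne_zero _ (u_ne_zero ht)
  set z : B := (algebraMap R B t) ^ (-m) with hzdef
  set L2' := Submodule.map ((scaleEquiv R (V := W) z hz : W ≃ₗ[R] W) : W →ₗ[R] W) L2 with hL2'
  obtain ⟨bS, hS1, hS2⟩ := hS
  obtain ⟨bQ, hQ1, hQ2⟩ := hQ
  obtain ⟨bV, hV1, hV2⟩ := hV
  refine main0 ht S L1 L2' (fun i => σ i - m) (fun i => τ i - m) (fun i => ν i - m)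
    ⟨bS, hS1, ?_⟩ ⟨bQ, hQ1, ?_⟩ ⟨bV, hV1, ?_⟩
  · rw [hL2', comap_scale_comm, hS2, map_scale_span]
    refine span_range_congr fun i => ?_
    rw [hzdef]
    exact smul_merge ht m (bS i) (σ i)
  · rw [hL2', map_scale_comm, hQ2, map_scale_span]
    refine span_range_congr fun i => ?_
    rw [hzdef]
    exact smul_merge ht m (bQ i) (τ i)
  · rw [hL2', hV2, map_scale_span]
    refine span_range_congr fun i => ?_
    rw [hzdef]
    exact smul_merge ht m (bV i) (ν i)

theorem core_ineq_neg {n s q : ℕ} (ht : Irreducible t) (S : Submodule B W)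
    (L1 L2 : Submodule R W)
    (σ : Fin s → ℤ) (τ : Fin q → ℤ) (ν : Fin n → ℤ)
    (hS : LatticePairHasType (B := B) t σ (L1.comap (S.subtype.restrictScalars R))
        (L2.comap (S.subtype.restrictScalars R)))
    (hQ : LatticePairHasType (B := B) t τ (Submodule.map (S.mkQ.restrictScalars R) L1)
        (Submodule.map (S.mkQ.restrictScalars R) L2))
    (hV : LatticePairHasType (B := B) t ν L1 L2) (m : ℤ) :
    ((∑ i, (m - σ i).toNat) + ∑ i, (m - τ i).toNat) ≤ ∑ i, (m - ν i).toNat := by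
  have h := TypeDom.core_ineq ht S L2 L1 (fun i => -σ i) (fun i => -τ i) (fun i => -ν i)
    (type_swap ht hS) (type_swap ht hQ) (type_swap ht hV) (-m)
  have hconv : ∀ (k : ℕ) (f : Fin k → ℤ), (∑ i, (-f i - -m).toNat) = ∑ i, (m - f i).toNat :=
    fun k f => Finset.sum_congr rfl fun i _ => by congr 1; ring
  rw [hconv s σ, hconv q τ, hconv n ν] at h
  exact h

end Algebra

end TypeDom

/-- Dominance of types in strict exact sequences of bilatticed vector spaces: for a
`B`-subspace `S ⊆ W` with induced lattices, quotient `Q = W/S` with quotient lattices, if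
`S` has type `σ`, `Q` has type `τ`, `W` has type `ν`, and `μ` is the (sorted) merge of `σ`
and `τ` (the type of `S ⊕ Q`), then `μ ≤ ν` in the dominance order: every partial sum of
`μ` is at most the corresponding partial sum of `ν`, with equal total sums. -/
theorem type_dominance_of_strict_exact
    {R B W : Type*} [CommRing R] [IsDomain R] [IsDiscreteValuationRing R]
    [Field B] [Algebra R B] [IsFractionRing R B]
    [AddCommGroup W] [Module B W] [Module R W] [IsScalarTower R B W]
    (t : R) (ht : Irreducible t)
    (S : Submodule B W)
    (𝓛₁ 𝓛₂ : Submodule R W)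
    (h₁ : 𝓛₁.FG ∧ Submodule.span B (𝓛₁ : Set W) = ⊤)
    (h₂ : 𝓛₂.FG ∧ Submodule.span B (𝓛₂ : Set W) = ⊤)
    {s q nV : ℕ} (σ : Fin s → ℤ) (τ : Fin q → ℤ) (ν : Fin nV → ℤ) (μ : Fin nV → ℤ)
    (hσa : Antitone σ) (hτa : Antitone τ) (hνa : Antitone ν) (hμa : Antitone μ)
    (hS : LatticePairHasType (B := B) t σ (𝓛₁.comap (S.subtype.restrictScalars R))
        (𝓛₂.comap (S.subtype.restrictScalars R)))
    (hQ : LatticePairHasType (B := B) t τ (Submodule.map (S.mkQ.restrictScalars R) 𝓛₁)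
        (Submodule.map (S.mkQ.restrictScalars R) 𝓛₂))
    (hV : LatticePairHasType (B := B) t ν 𝓛₁ 𝓛₂)
    (hμ : Finset.univ.val.map μ = Finset.univ.val.map σ + Finset.univ.val.map τ) :
    (∀ K : ℕ,
        ∑ i ∈ Finset.univ.filter (fun i : Fin nV => (i : ℕ) < K), μ i ≤
        ∑ i ∈ Finset.univ.filter (fun i : Fin nV => (i : ℕ) < K), ν i) ∧
      (∑ i, μ i = ∑ i, ν i) := by
  classical
  have hts : ∀ (k : ℕ) (f : Fin k → ℤ), ((∑ i, (f i).toNat : ℕ) : ℤ) = ∑ i, max (f i) 0 := by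
    intro k f
    push_cast
    exact Finset.sum_congr rfl fun i _ => Int.toNat_eq_max _
  have hsum : ∀ f : ℤ → ℤ, (∑ i, f (μ i)) = (∑ i, f (σ i)) + ∑ i, f (τ i) := by
    intro f
    have h := congrArg (fun M : Multiset ℤ => (M.map f).sum) hμ
    simp only [Multiset.map_map, Multiset.map_add, Multiset.sum_add, Function.comp] at h
    exact h
  have hI : ∀ m : ℤ, (∑ i, max (μ i - m) 0) ≤ ∑ i, max (ν i - m) 0 := by
    intro m
    have hc := TypeDom.core_ineq ht S 𝓛₁ 𝓛₂ σ τ ν hS hQ hV m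
    have hcast : ((∑ i, (σ i - m).toNat : ℕ) : ℤ) + ((∑ i, (τ i - m).toNat : ℕ) : ℤ) ≤
        ((∑ i, (ν i - m).toNat : ℕ) : ℤ) := by exact_mod_cast hc
    rw [hts s _, hts q _, hts nV _] at hcast
    calc (∑ i, max (μ i - m) 0) = (∑ i, max (σ i - m) 0) + ∑ i, max (τ i - m) 0 :=
          hsum (fun x => max (x - m) 0)
    _ ≤ ∑ i, max (ν i - m) 0 := hcast
  have hII : ∀ m : ℤ, (∑ i, max (m - μ i) 0) ≤ ∑ i, max (m - ν i) 0 := by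
    intro m
    have hc := TypeDom.core_ineq_neg ht S 𝓛₁ 𝓛₂ σ τ ν hS hQ hV m
    have hcast : ((∑ i, (m - σ i).toNat : ℕ) : ℤ) + ((∑ i, (m - τ i).toNat : ℕ) : ℤ) ≤
        ((∑ i, (m - ν i).toNat : ℕ) : ℤ) := by exact_mod_cast hc
    rw [hts s _, hts q _, hts nV _] at hcast
    calc (∑ i, max (m - μ i) 0) = (∑ i, max (m - σ i) 0) + ∑ i, max (m - τ i) 0 :=
          hsum (fun x => max (m - x) 0)
    _ ≤ ∑ i, max (m - ν i) 0 := hcast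
  -- total sums are equal
  set Mset : Finset ℤ := Finset.univ.image μ ∪ Finset.univ.image ν ∪ {0} with hMset
  have hne : Mset.Nonempty := ⟨0, by simp [hMset]⟩
  set m0 := Mset.min' hne with hm0
  set m1 := Mset.max' hne with hm1
  have hmemμ : ∀ i, μ i ∈ Mset := fun i => Finset.mem_union.mpr (Or.inl
    (Finset.mem_union.mpr (Or.inl (Finset.mem_image_of_mem μ (Finset.mem_univ i)))))
  have hmemν : ∀ i, ν i ∈ Mset := fun i => Finset.mem_union.mpr (Or.inl
    (Finset.mem_union.mpr (Or.inr (Finset.mem_image_of_mem ν (Finset.mem_univ i)))))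
  have hm0μ : ∀ i, m0 ≤ μ i := fun i => Finset.min'_le _ _ (hmemμ i)
  have hm0ν : ∀ i, m0 ≤ ν i := fun i => Finset.min'_le _ _ (hmemν i)
  have hm1μ : ∀ i, μ i ≤ m1 := fun i => Finset.le_max' _ _ (hmemμ i)
  have hm1ν : ∀ i, ν i ≤ m1 := fun i => Finset.le_max' _ _ (hmemν i)
  have hconst : ∀ m : ℤ, (∑ _i : Fin nV, m) = (nV : ℤ) * m := by
    intro m
    rw [Finset.sum_const, Finset.card_univ, Fintype.card_fin, nsmul_eq_mul]
  have htot : (∑ i, μ i) = ∑ i, ν i := by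
    have e1 := hI m0
    rw [Finset.sum_congr rfl (fun i _ => max_eq_left (by have := hm0μ i; omega)),
      Finset.sum_congr rfl (fun (i : Fin nV) _ =>
        max_eq_left (a := ν i - m0) (by have := hm0ν i; omega)),
      Finset.sum_sub_distrib, Finset.sum_sub_distrib, hconst m0] at e1
    have e2 := hII m1
    rw [Finset.sum_congr rfl (fun i _ => max_eq_left (by have := hm1μ i; omega)),
      Finset.sum_congr rfl (fun (i : Fin nV) _ =>
        max_eq_left (a := m1 - ν i) (by have := hm1ν i; omega)),
      Finset.sum_sub_distrib, Finset.sum_sub_distrib, hconst m1] at e2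
    omega
  refine ⟨fun K => ?_, htot⟩
  by_cases hK : nV ≤ K
  · have hfilt : Finset.univ.filter (fun i : Fin nV => (i : ℕ) < K) = Finset.univ := by
      ext i
      simp only [Finset.mem_filter, Finset.mem_univ, true_and, iff_true]
      have := i.isLt
      omega
    rw [hfilt]
    exact le_of_eq htot
  · push_neg at hK
    rcases Nat.eq_zero_or_pos K with hK0 | hKpos
    · subst hK0
      have hfilt : Finset.univ.filter (fun i : Fin nV => (i : ℕ) < 0) = ∅ := by
        ext i
        simp
      rw [hfilt]
      simp
    · -- 1 ≤ K < nV
      set kidx : Fin nV := ⟨K - 1, by omega⟩ with hkidx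
      set m := ν kidx with hm
      set Kf := Finset.univ.filter (fun i : Fin nV => (i : ℕ) < K) with hKf
      have hcard : Kf.card = K := by
        have hfilt : Kf = Finset.Iio (⟨K, hK⟩ : Fin nV) := by
          ext i
          simp [hKf, Finset.mem_Iio, Fin.lt_iff_val_lt_val]
        rw [hfilt, Fin.card_Iio]
      have hνge : ∀ i : Fin nV, (i : ℕ) < K → m ≤ ν i := by
        intro i hi
        exact hνa (by rw [Fin.le_iff_val_le_val]; simp [hkidx]; omega)
      have hνle : ∀ i : Fin nV, ¬ ((i : ℕ) < K) → ν i ≤ m := by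
        intro i hi
        exact hνa (by rw [Fin.le_iff_val_le_val]; simp [hkidx]; omega)
      have hid : (∑ i ∈ Kf, ν i) = (K : ℤ) * m + ∑ i, max (ν i - m) 0 := by
        rw [← Finset.sum_filter_add_sum_filter_not Finset.univ
          (fun i : Fin nV => (i : ℕ) < K) (fun i => max (ν i - m) 0)]
        rw [Finset.sum_congr rfl (fun i hi => max_eq_left (a := ν i - m)
          (by have := hνge i (Finset.mem_filter.mp hi).2; omega))]
        rw [Finset.sum_eq_zero (fun i hi => max_eq_right (a := ν i - m)
          (by have := hνle i (Finset.mem_filter.mp hi).2; omega))]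
        rw [add_zero, Finset.sum_sub_distrib, Finset.sum_const, hcard, nsmul_eq_mul]
        ring
      have hbd : (∑ i ∈ Kf, μ i) ≤ (K : ℤ) * m + ∑ i, max (μ i - m) 0 := by
        have step1 : (∑ i ∈ Kf, μ i) ≤ ∑ i ∈ Kf, (m + max (μ i - m) 0) :=
          Finset.sum_le_sum fun i _ => by have := le_max_left (μ i - m) 0; omega
        have step2 : (∑ i ∈ Kf, (m + max (μ i - m) 0)) =
            (K : ℤ) * m + ∑ i ∈ Kf, max (μ i - m) 0 := by
          rw [Finset.sum_add_distrib, Finset.sum_const, hcard, nsmul_eq_mul]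
        have step3 : (∑ i ∈ Kf, max (μ i - m) 0) ≤ ∑ i, max (μ i - m) 0 :=
          Finset.sum_le_sum_of_subset_of_nonneg (Finset.filter_subset _ _)
            (fun i _ _ => le_max_right _ 0)
        omega
      have := hI m
      rw [hid]
      omega
end

section
/- Let C be a field, K = GL_n(C[[t]]), and let μ = (μ_1 ≥ … ≥ μ_n) be a dominant cocharacter of the diagonal torus of GL_n, with t^μ = diag(t^{μ_1}, …, t^{μ_n}). Let u be an upper-triangular unipotent matrix in GL_n(C((t))). Then u · t^μ ∈ K t^μ K if and only if u ∈ GL_n(C[[t]]), i.e., all entries of u lie in C[[t]]. -/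
open scoped Matrix

open Finset in
private lemma my_det_mul_expand {R : Type*} [CommRing R] {m n : Type*} [DecidableEq m]
    [Fintype m] [Fintype n] (X : Matrix m n R) (Y : Matrix n m R) :
    (X * Y).det = ∑ f : m → n, (∏ p, X p (f p)) * (Matrix.of fun p q => Y (f p) q).det := by
  have h1 : (X * Y) = Matrix.of fun p => ∑ k : n, X p k • Y k := by
    ext p q
    simp [Matrix.mul_apply, Finset.sum_apply]
  rw [h1]
  have h2 : (Matrix.of fun p => ∑ k : n, X p k • Y k).det
      = Matrix.detRowAlternating (R := R) (n := m) (fun p => ∑ k : n, X p k • Y k) := rfl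
  rw [h2, show (Matrix.detRowAlternating (R := R) (n := m) (fun p => ∑ k : n, X p k • Y k) : R)
      = ∑ f : m → n, Matrix.detRowAlternating (R := R) (n := m)
        (fun p => X p (f p) • Y (f p)) from
    (Matrix.detRowAlternating (R := R) (n := m)).toMultilinearMap.map_sum
      (g := fun p (k : n) => X p k • Y k)]
  refine Finset.sum_congr rfl fun f _ => ?_
  have h3 : Matrix.detRowAlternating (R := R) (n := m) (fun p => X p (f p) • Y (f p))
      = (∏ p, X p (f p)) • Matrix.detRowAlternating (R := R) (n := m) (fun p => Y (f p)) :=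
    (Matrix.detRowAlternating (R := R) (n := m)).toMultilinearMap.map_smul_univ
      (fun p => X p (f p)) (fun p => Y (f p))
  rw [h3, smul_eq_mul]
  rfl

private lemma my_fin_strictMono_le {m n : ℕ} {g : Fin m → Fin n} (hg : StrictMono g) :
    ∀ p : Fin m, (p : ℕ) ≤ (g p : ℕ) := by
  have key : ∀ a : ℕ, ∀ ha : a < m, a ≤ (g ⟨a, ha⟩ : ℕ) := by
    intro a
    induction a with
    | zero => intro _; exact Nat.zero_le _
    | succ a ih =>
      intro ha
      have ha' : a < m := Nat.lt_of_succ_lt ha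
      have h1 : (⟨a, ha'⟩ : Fin m) < ⟨a + 1, ha⟩ := by simp [Fin.lt_def]
      have h4 : (g ⟨a, ha'⟩ : ℕ) < (g ⟨a + 1, ha⟩ : ℕ) := hg h1
      have h3 := ih ha'
      omega
  intro p
  have := key p.val p.isLt
  simpa using this

private lemma my_sum_antitone_le {n : ℕ} (μ : Fin n → ℤ) (hμ : Antitone μ) {m : ℕ}
    (c f : Fin m → Fin n) (hc : ∀ p : Fin m, (c p : ℕ) = n - m + p)
    (hf : Function.Injective f) :
    ∑ p, μ (c p) ≤ ∑ p, μ (f p) := by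
  classical
  have hmn : m ≤ n := by simpa using Fintype.card_le_of_injective f hf
  set s : Finset (Fin n) := Finset.univ.image f with hs
  have hcard : s.card = m := by
    rw [hs, Finset.card_image_of_injective _ hf, Finset.card_univ, Fintype.card_fin]
  set g : Fin m → Fin n := fun p => (s.orderIsoOfFin hcard p : Fin n) with hg
  have hgmono : StrictMono g := fun p q h =>
    Subtype.coe_lt_coe.mpr ((s.orderIsoOfFin hcard).lt_iff_lt.mpr h)
  have hsum1 : ∑ p, μ (f p) = ∑ x ∈ s, μ x :=
    (Finset.sum_image (by intro x _ y _ h; exact hf h)).symm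
  have hsum2 : ∑ x ∈ s, μ x = ∑ p, μ (g p) := by
    rw [← Finset.sum_coe_sort s μ]
    exact (Equiv.sum_comp (s.orderIsoOfFin hcard).toEquiv (fun x : s => μ x)).symm
  have hpt : ∀ p : Fin m, μ (c p) ≤ μ (g p) := by
    intro p
    apply hμ
    rw [Fin.le_def, hc p]
    -- show (g p : ℕ) ≤ n - m + p
    set G : Fin m → Fin n := fun q => (g q.rev).rev with hG
    have hGmono : StrictMono G := by
      intro q q' h
      rw [hG]
      simp only [Fin.rev_lt_rev]
      exact hgmono (Fin.rev_lt_rev.mpr h)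
    have h1 := my_fin_strictMono_le hGmono p.rev
    have h2 : G p.rev = (g p).rev := by
      show (g p.rev.rev).rev = (g p).rev
      rw [Fin.rev_rev]
    rw [h2] at h1
    have h3 : (p.rev : ℕ) = m - (p + 1) := Fin.val_rev p
    have h4 : ((g p).rev : ℕ) = n - ((g p : ℕ) + 1) := Fin.val_rev (g p)
    have h5 : (p : ℕ) < m := p.isLt
    have h6 : (g p : ℕ) < n := (g p).isLt
    omega
  rw [hsum1, hsum2]
  exact Finset.sum_le_sum fun p _ => hpt p

private lemma my_prod_zpow {F : Type*} [Field F] {x : F} (hx : x ≠ 0) {ι : Type*}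
    (s : Finset ι) (f : ι → ℤ) : ∏ i ∈ s, x ^ f i = x ^ (∑ i ∈ s, f i) := by
  classical
  induction s using Finset.induction_on with
  | empty => simp
  | insert _ _ hi ih =>
    rw [Finset.prod_insert hi, Finset.sum_insert hi, ih, zpow_add₀ hx]

/-- Unipotent upper-triangular matrices and affine Schubert cells: for a dominant
cocharacter `μ₁ ≥ … ≥ μₙ` and an upper-triangular unipotent `u ∈ GL_n(C((t)))`, one has
`u·t^μ ∈ GL_n(C[[t]])·t^μ·GL_n(C[[t]])` if and only if all entries of `u` lie in `C[[t]]`. -/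
theorem unipotent_in_cell_iff_integral
    (C : Type*) [Field C] (n : ℕ) (μ : Fin n → ℤ) (hμ : Antitone μ)
    (u : Matrix (Fin n) (Fin n) (LaurentSeries C))
    (hdiag : ∀ i, u i i = 1)
    (hlow : ∀ i j : Fin n, j < i → u i j = 0) :
    (∃ a b : GL (Fin n) (PowerSeries C),
        u * Matrix.diagonal (fun i =>
            (algebraMap (PowerSeries C) (LaurentSeries C) PowerSeries.X) ^ (μ i)) =
          ((a : Matrix (Fin n) (Fin n) (PowerSeries C)).map
              (algebraMap (PowerSeries C) (LaurentSeries C))) *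
            Matrix.diagonal (fun i =>
              (algebraMap (PowerSeries C) (LaurentSeries C) PowerSeries.X) ^ (μ i)) *
            ((b : Matrix (Fin n) (Fin n) (PowerSeries C)).map
              (algebraMap (PowerSeries C) (LaurentSeries C)))) ↔
      ∀ i j : Fin n, u i j ∈ Set.range (algebraMap (PowerSeries C) (LaurentSeries C)) := by
  classical
  set φ := algebraMap (PowerSeries C) (LaurentSeries C) with hφ
  have hφinj : Function.Injective φ := by
    rw [hφ, LaurentSeries.coe_algebraMap]
    exact HahnSeries.ofPowerSeries_injective
  set t : LaurentSeries C := φ PowerSeries.X with htdef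
  have htne : t ≠ 0 := by
    intro h
    apply PowerSeries.X_ne_zero (R := C)
    apply hφinj
    rw [← htdef, h, map_zero]
  set T : Matrix (Fin n) (Fin n) (LaurentSeries C) :=
    Matrix.diagonal (fun i => t ^ (μ i)) with hT
  constructor
  · rintro ⟨a, b, hE⟩ i j
    by_cases hij : j < i
    · exact ⟨0, by rw [map_zero, hlow i j hij]⟩
    · push_neg at hij
      set a' := (a : Matrix (Fin n) (Fin n) (PowerSeries C)) with ha'
      set b' := (b : Matrix (Fin n) (Fin n) (PowerSeries C)) with hb'
      set A := a'.map φ with hA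
      set B := b'.map φ with hB
      set k := n - 1 - j.val with hk
      have hjn : (j : ℕ) < n := j.isLt
      have hjk : (j : ℕ) + k = n - 1 := by omega
      set r : Fin (k+1) → Fin n :=
        Fin.cases i (fun p => ⟨(j : ℕ) + 1 + p.val, by have := p.isLt; omega⟩) with hr
      set c : Fin (k+1) → Fin n :=
        (fun p => ⟨(j : ℕ) + p.val, by have := p.isLt; omega⟩) with hc
      have hE' : u * T = A * (T * B) := by rw [hE, Matrix.mul_assoc]
      have hr0 : r 0 = i := by simp [hr]
      have hc0 : c 0 = j := by rw [hc]; apply Fin.ext; simp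
      have hrs : ∀ p : Fin k, (r p.succ : ℕ) = (j : ℕ) + 1 + p.val := by
        intro p; rw [hr]; simp
      have hcs : ∀ p : Fin (k+1), (c p : ℕ) = (j : ℕ) + p.val := by
        intro p; rw [hc]
      have hrc : ∀ p : Fin k, r p.succ = c p.succ := by
        intro p
        apply Fin.ext
        rw [hrs, hcs, Fin.val_succ]
        omega
      have htri : ((u.submatrix r c)).BlockTriangular id := by
        intro p q hqp
        have hp0 : p ≠ 0 := by
          intro h
          rw [h] at hqp
          exact absurd hqp (by simp)
        obtain ⟨p', rfl⟩ := Fin.eq_succ_of_ne_zero hp0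
        rw [Matrix.submatrix_apply]
        apply hlow
        rw [Fin.lt_def, hrs, hcs]
        have hq : (q : ℕ) < (p'.succ : ℕ) := hqp
        rw [Fin.val_succ] at hq
        omega
      have hdetu : (u.submatrix r c).det = u i j := by
        rw [Matrix.det_of_upperTriangular htri, Fin.prod_univ_succ]
        simp only [Matrix.submatrix_apply]
        rw [hr0, hc0]
        have h5 : ∀ p : Fin k, u (r p.succ) (c p.succ) = 1 := fun p => by
          rw [hrc p]; exact hdiag _
        simp [h5]
      have hS1 : (u * T).submatrix r c
          = u.submatrix r c * Matrix.diagonal (fun q => t ^ (μ (c q))) := by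
        ext p q
        simp [hT, Matrix.mul_diagonal, Matrix.submatrix_apply]
      set sc : ℤ := ∑ q : Fin (k+1), μ (c q) with hsc
      have hdetS1 : ((u * T).submatrix r c).det = u i j * t ^ sc := by
        rw [hS1, Matrix.det_mul, hdetu, Matrix.det_diagonal, my_prod_zpow htne, ← hsc]
      have hS2 : (u * T).submatrix r c
          = (A.submatrix r id) * ((T * B).submatrix id c) := by
        rw [hE']
        ext p q
        simp [Matrix.mul_apply, Matrix.submatrix_apply]
      have hP : ∃ y : PowerSeries C, ((u * T).submatrix r c).det = t ^ sc * φ y := by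
        rw [hS2, my_det_mul_expand]
        apply Finset.sum_induction _ (fun x => ∃ y : PowerSeries C, x = t ^ sc * φ y)
        · rintro x1 x2 ⟨y1, rfl⟩ ⟨y2, rfl⟩
          exact ⟨y1 + y2, by rw [map_add, mul_add]⟩
        · exact ⟨0, by rw [map_zero, mul_zero]⟩
        · intro f _
          by_cases hf : Function.Injective f
          · have h1 : (Matrix.of fun p q => ((T * B).submatrix id c) (f p) q).det
                = (∏ p : Fin (k+1), t ^ (μ (f p)))
                    * (Matrix.of fun p q => B (f p) (c q)).det := by
              have h1b := Matrix.det_mul_column (fun p : Fin (k+1) => t ^ (μ (f p)))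
                (Matrix.of fun p q => B (f p) (c q))
              rw [← h1b]
              congr 1
              ext p q
              simp [hT, Matrix.diagonal_mul, Matrix.submatrix_apply]
            have h2 : (∏ p : Fin (k+1), t ^ (μ (f p)))
                = t ^ (∑ p : Fin (k+1), μ (f p)) := my_prod_zpow htne _ _
            have h3 : (Matrix.of fun p q => B (f p) (c q)).det
                = φ ((Matrix.of fun p q => b' (f p) (c q)).det) := by
              rw [RingHom.map_det, RingHom.mapMatrix_apply]
              congr 1
            have h4 : (∏ p : Fin (k+1), (A.submatrix r id) p (f p))
                = φ (∏ p : Fin (k+1), a' (r p) (f p)) := by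
              rw [map_prod]
              refine Finset.prod_congr rfl fun p _ => ?_
              simp [hA, Matrix.submatrix_apply, Matrix.map_apply]
            have hle : sc ≤ ∑ p : Fin (k+1), μ (f p) := by
              rw [hsc]
              apply my_sum_antitone_le μ hμ c f _ hf
              intro p
              rw [hcs p]
              omega
            have hd0 : (0 : ℤ) ≤ (∑ p : Fin (k+1), μ (f p)) - sc := by omega
            have hts : t ^ (∑ p : Fin (k+1), μ (f p))
                = t ^ sc * φ (PowerSeries.X ^ ((∑ p : Fin (k+1), μ (f p)) - sc).toNat) := by
              rw [map_pow, ← htdef, ← zpow_natCast, Int.toNat_of_nonneg hd0, ← zpow_add₀ htne]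
              congr 1
              ring
            refine ⟨(PowerSeries.X ^ ((∑ p : Fin (k+1), μ (f p)) - sc).toNat)
              * ((∏ p : Fin (k+1), a' (r p) (f p))
                  * (Matrix.of fun p q => b' (f p) (c q)).det), ?_⟩
            rw [h1, h2, h3, h4, hts, map_mul, map_mul, map_pow]
            ring
          · have h0 : (Matrix.of fun p q => ((T * B).submatrix id c) (f p) q).det = 0 := by
              obtain ⟨p1, p2, he, hne⟩ := Function.not_injective_iff.mp hf
              apply Matrix.det_zero_of_row_eq hne
              funext q
              simp [he]
            rw [h0, mul_zero]
            exact ⟨0, by rw [map_zero, mul_zero]⟩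
      obtain ⟨y, hy⟩ := hP
      rw [hdetS1] at hy
      refine ⟨y, ?_⟩
      have hy2 : t ^ sc * u i j = t ^ sc * φ y := by rw [mul_comm]; exact hy
      exact (mul_left_cancel₀ (zpow_ne_zero _ htne) hy2).symm
  · intro h
    choose v hv using h
    set u₀ : Matrix (Fin n) (Fin n) (PowerSeries C) := Matrix.of v with hu₀
    have hmap : u₀.map ⇑φ = u := by
      apply Matrix.ext
      intro i j
      rw [Matrix.map_apply]
      exact hv i j
    have hdetu : u.det = 1 := by
      rw [Matrix.det_of_upperTriangular (by intro i j hji; exact hlow i j hji)]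
      simp [hdiag]
    have hdet0 : u₀.det = 1 := by
      apply hφinj
      rw [RingHom.map_det, RingHom.mapMatrix_apply, hmap, hdetu, map_one]
    have hunit : IsUnit u₀ := (Matrix.isUnit_iff_isUnit_det u₀).mpr
      (by rw [hdet0]; exact isUnit_one)
    refine ⟨hunit.unit, 1, ?_⟩
    have h1 : ((hunit.unit : Matrix (Fin n) (Fin n) (PowerSeries C))) = u₀ := hunit.unit_spec
    rw [h1, Units.val_one, Matrix.map_one φ (map_zero φ) (map_one φ), mul_one, hmap]
end

section
/- Let C be a field, K = GL_n(C[[t]]), μ = (μ_1 ≥ … ≥ μ_n) a dominant cocharacter with t^μ = diag(t^{μ_i}), and let u ∈ GL_n(C((t))) be a unipotent matrix that is upper-triangular (or more generally lies in the unipotent radical of some Borel subgroup containing the diagonal torus). If ν is the dominant cocharacter with u·t^μ ∈ K t^ν K, then μ ≤ ν in the dominance order (equal determinant, and all partial sums of ν dominate those of μ). -/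
open Finset Matrix Equiv

section Helpers
variable {C : Type*} [Field C]

def Vge (c : ℤ) (f : LaurentSeries C) : Prop := ∀ d : ℤ, d < c → f.coeff d = 0

namespace Vge

lemma mono {c c' : ℤ} (h : c' ≤ c) {f : LaurentSeries C} (hf : Vge c f) : Vge c' f :=
  fun d hd => hf d (lt_of_lt_of_le hd h)

lemma zero (c : ℤ) : Vge c (0 : LaurentSeries C) := fun _ _ => rfl

lemma single (m : ℤ) (r : C) : Vge m (HahnSeries.single m r) := by
  intro d hd
  rw [HahnSeries.coeff_single_of_ne (ne_of_lt hd)]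

lemma one : Vge (0:ℤ) (1 : LaurentSeries C) := single 0 1

lemma add {c : ℤ} {f g : LaurentSeries C} (hf : Vge c f) (hg : Vge c g) : Vge c (f + g) := by
  intro d hd
  rw [HahnSeries.coeff_add, hf d hd, hg d hd, add_zero]

lemma sum {ι : Type*} {c : ℤ} {s : Finset ι} {f : ι → LaurentSeries C}
    (h : ∀ i ∈ s, Vge c (f i)) : Vge c (∑ i ∈ s, f i) := by
  classical
  induction s using Finset.cons_induction with
  | empty => simpa using zero c
  | cons a s ha ih =>
    rw [Finset.sum_cons]
    exact add (h a (Finset.mem_cons_self a s)) (ih fun i hi => h i (Finset.mem_cons_of_mem hi))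

lemma mul {a b : ℤ} {f g : LaurentSeries C} (hf : Vge a f) (hg : Vge b g) :
    Vge (a + b) (f * g) := by
  intro d hd
  rw [HahnSeries.coeff_mul]
  refine Finset.sum_eq_zero fun ij hij => ?_
  rw [Finset.mem_addAntidiagonal] at hij
  rcases lt_or_ge ij.1 a with h1 | h1
  · rw [hf ij.1 h1, zero_mul]
  · have : ij.2 < b := by have := hij.2.2; omega
    rw [hg ij.2 this, mul_zero]

lemma prod {ι : Type*} {s : Finset ι} {c : ι → ℤ} {f : ι → LaurentSeries C}
    (h : ∀ i ∈ s, Vge (c i) (f i)) : Vge (∑ i ∈ s, c i) (∏ i ∈ s, f i) := by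
  classical
  induction s using Finset.cons_induction with
  | empty => simpa using one
  | cons a s ha ih =>
    rw [Finset.sum_cons, Finset.prod_cons]
    exact mul (h a (Finset.mem_cons_self a s)) (ih fun i hi => h i (Finset.mem_cons_of_mem hi))

lemma ofPS (x : PowerSeries C) : Vge 0 (algebraMap (PowerSeries C) (LaurentSeries C) x) := by
  intro d hd
  rw [LaurentSeries.coe_algebraMap, HahnSeries.ofPowerSeries_apply]
  apply HahnSeries.embDomain_notin_image_support
  rintro ⟨m, hm, h⟩
  have : (m : ℤ) = d := h
  omega

end Vge

lemma coeff_ofPS_zero (x : PowerSeries C) :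
    (algebraMap (PowerSeries C) (LaurentSeries C) x).coeff 0 = PowerSeries.constantCoeff x := by
  rw [LaurentSeries.coe_algebraMap]
  have := HahnSeries.ofPowerSeries_apply_coeff (Γ := ℤ) x 0
  simpa [PowerSeries.coeff_zero_eq_constantCoeff] using this

lemma algX_zpow (m : ℤ) :
    (algebraMap (PowerSeries C) (LaurentSeries C) PowerSeries.X) ^ m
      = (HahnSeries.single m 1 : LaurentSeries C) := by
  have hX : algebraMap (PowerSeries C) (LaurentSeries C) PowerSeries.X
      = (HahnSeries.single (1:ℤ) (1:C)) := by
    rw [LaurentSeries.coe_algebraMap]; exact HahnSeries.ofPowerSeries_X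
  have hpow : ∀ k : ℕ, (HahnSeries.single (1:ℤ) (1:C) : LaurentSeries C) ^ k
      = HahnSeries.single (k : ℤ) 1 := by
    intro k
    rw [HahnSeries.single_pow]
    simp
  rw [hX]
  rcases m with k | k
  · rw [Int.ofNat_eq_coe, zpow_natCast, hpow]
  · rw [zpow_negSucc, hpow]
    refine inv_eq_of_mul_eq_one_right ?_
    rw [HahnSeries.single_mul_single, show ((k+1:ℕ):ℤ) + (Int.negSucc k) = 0 from by simp [Int.negSucc_eq], mul_one]
    rfl

lemma prod_single {ι : Type*} (s : Finset ι) (c : ι → ℤ) :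
    (∏ i ∈ s, (HahnSeries.single (c i) 1 : LaurentSeries C))
      = HahnSeries.single (∑ i ∈ s, c i) 1 := by
  classical
  induction s using Finset.cons_induction with
  | empty => simp
  | cons a s ha ih =>
    rw [Finset.prod_cons, Finset.sum_cons, ih, HahnSeries.single_mul_single, one_mul]

end Helpers

section Det

variable {R : Type*} [CommRing R]

lemma det_mul_expand {k n : ℕ} (P : Matrix (Fin k) (Fin n) R) (Q : Matrix (Fin n) (Fin k) R) :
    (P * Q).det = ∑ g : Fin k → Fin n, (∏ i, P i (g i)) * (Q.submatrix g id).det := by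
  have h1 : ∀ σ : Perm (Fin k), (∏ i, (P * Q) (σ i) i)
      = ∑ g : Fin k → Fin n, (∏ i, P i (g i)) * ∏ i, Q (g (σ i)) i := by
    intro σ
    simp only [Matrix.mul_apply]
    rw [Finset.prod_univ_sum, Fintype.piFinset_univ]
    refine Fintype.sum_equiv (Equiv.arrowCongr σ (Equiv.refl (Fin n))) _ _ ?_
    intro g
    simp only [Equiv.arrowCongr_apply, Equiv.refl_apply, Function.comp]
    rw [Finset.prod_mul_distrib]
    congr 1
    · rw [← Equiv.prod_comp σ (fun j => P j (g (σ.symm j)))]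
      exact Finset.prod_congr rfl fun i _ => by rw [Equiv.symm_apply_apply]
    · exact Finset.prod_congr rfl fun i _ => by rw [Equiv.symm_apply_apply]
  rw [Matrix.det_apply']
  have h2 : ∀ σ : Perm (Fin k),
      (((Equiv.Perm.sign σ : ℤ) : R) * ∏ i, (P * Q) (σ i) i)
        = ∑ g : Fin k → Fin n, (∏ i, P i (g i)) *
            (((Equiv.Perm.sign σ : ℤ) : R) * ∏ i, Q (g (σ i)) i) := by
    intro σ
    rw [h1, Finset.mul_sum]
    exact Finset.sum_congr rfl fun g _ => by ring
  rw [Finset.sum_congr rfl fun σ _ => h2 σ, Finset.sum_comm]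
  refine Finset.sum_congr rfl fun g _ => ?_
  rw [Matrix.det_apply', Finset.mul_sum]
  refine Finset.sum_congr rfl fun σ _ => ?_
  simp only [Matrix.submatrix_apply, id_eq]

variable {R : Type*} [CommRing R]

lemma det_submatrix_one {n k : ℕ} (u : Matrix (Fin n) (Fin n) R) (σ : Equiv.Perm (Fin n))
    (hdiag : ∀ i, u i i = 1) (htri : ∀ i j : Fin n, σ.symm j < σ.symm i → u i j = 0)
    (e : Fin k → Fin n) (he : Function.Injective e) :
    (u.submatrix e e).det = 1 := by
  set τ := Tuple.sort (fun i => σ.symm (e i)) with hτ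
  have hmono : Monotone ((fun i => σ.symm (e i)) ∘ τ) := Tuple.monotone_sort _
  have hsm : StrictMono ((fun i => σ.symm (e i)) ∘ τ) :=
    hmono.strictMono_of_injective ((σ.symm.injective.comp he).comp τ.injective)
  rw [← Matrix.det_submatrix_equiv_self τ (u.submatrix e e), Matrix.submatrix_submatrix]
  rw [Matrix.det_of_upperTriangular]
  · exact Finset.prod_eq_one fun i _ => hdiag _
  · intro i j hij
    exact htri _ _ (hsm hij)

lemma strictMono_fin_le {k n : ℕ} {f : Fin k → Fin n} (hf : StrictMono f) (i : Fin k) :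
    (i : ℕ) ≤ (f i : ℕ) := by
  obtain ⟨m, hm⟩ := i
  induction m with
  | zero => simp
  | succ p ih =>
    have hp : p < k := Nat.lt_of_succ_lt hm
    have h1 : f ⟨p, hp⟩ < f ⟨p+1, hm⟩ := hf (by simp [Fin.lt_def])
    have ihp := ih hp
    have h1' := Fin.lt_def.mp h1
    simp only [Fin.val_mk] at ihp h1' ⊢
    omega

lemma strictMono_fin_ub {k n : ℕ} {f : Fin k → Fin n} (hf : StrictMono f) (i : Fin k) :
    (f i : ℕ) ≤ n - k + i := by
  have hrev : StrictMono (fun j : Fin k => (f j.rev).rev) := by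
    intro a b hab
    have : b.rev < a.rev := by
      rw [Fin.lt_def] at hab ⊢
      simp [Fin.val_rev]
      omega
    have := hf this
    rw [Fin.lt_def] at this ⊢
    simp [Fin.val_rev] at this ⊢
    omega
  have h := strictMono_fin_le hrev i.rev
  have h1 := i.isLt
  have h2 := (f i).isLt
  simp [Fin.val_rev] at h
  omega

lemma sum_antitone_ge {n k : ℕ} (ν : Fin n → ℤ) (hν : Antitone ν) (hk : k ≤ n)
    (g : Fin k → Fin n) (hg : Function.Injective g) :
    (∑ i : Fin k, ν ⟨n - k + i, by omega⟩) ≤ ∑ i : Fin k, ν (g i) := by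
  set τ := Tuple.sort g with hτ
  have hmono : Monotone (g ∘ τ) := Tuple.monotone_sort _
  have hsm : StrictMono (g ∘ τ) := hmono.strictMono_of_injective (hg.comp τ.injective)
  have h1 : ∑ i : Fin k, ν (g i) = ∑ i : Fin k, ν (g (τ i)) :=
    (Equiv.sum_comp τ (fun i => ν (g i))).symm
  rw [h1]
  refine Finset.sum_le_sum fun i _ => ?_
  refine hν ?_
  rw [Fin.le_def]
  exact strictMono_fin_ub hsm i

end Det

section KeyStep
variable {C : Type*} [Field C]

lemma key_step {n k : ℕ} (hk : k ≤ n)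
    (μ ν : Fin n → ℤ) (hν : Antitone ν)
    (u : Matrix (Fin n) (Fin n) (LaurentSeries C))
    (hdiag : ∀ i, u i i = 1)
    (σ : Equiv.Perm (Fin n)) (htri : ∀ i j : Fin n, σ.symm j < σ.symm i → u i j = 0)
    (a b : Matrix (Fin n) (Fin n) (PowerSeries C))
    (heq : u * Matrix.diagonal (fun i => (HahnSeries.single (μ i) 1 : LaurentSeries C)) =
      a.map (algebraMap (PowerSeries C) (LaurentSeries C)) *
        Matrix.diagonal (fun i => (HahnSeries.single (ν i) 1 : LaurentSeries C)) *
        b.map (algebraMap (PowerSeries C) (LaurentSeries C))) :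
    (∑ i : Fin k, ν ⟨n - k + (i : ℕ), by omega⟩) ≤ ∑ i : Fin k, μ ⟨n - k + (i : ℕ), by omega⟩ := by
  set φ := algebraMap (PowerSeries C) (LaurentSeries C) with hφ
  set e : Fin k → Fin n := fun i => ⟨n - k + (i : ℕ), by omega⟩ with he_def
  have he : Function.Injective e := by
    intro i j hij
    have : n - k + (i : ℕ) = n - k + (j : ℕ) := congrArg Fin.val hij
    exact Fin.ext (by omega)
  set D : Matrix (Fin n) (Fin n) (LaurentSeries C) :=
    Matrix.diagonal (fun i => (HahnSeries.single (ν i) 1 : LaurentSeries C)) with hD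
  -- left side minor
  have hL : ((u * Matrix.diagonal
        (fun i => (HahnSeries.single (μ i) 1 : LaurentSeries C))).submatrix e e).det
      = HahnSeries.single (∑ i : Fin k, μ (e i)) 1 := by
    have hsub : (u * Matrix.diagonal
          (fun i => (HahnSeries.single (μ i) 1 : LaurentSeries C))).submatrix e e
        = u.submatrix e e *
            Matrix.diagonal (fun i => (HahnSeries.single (μ (e i)) 1 : LaurentSeries C)) := by
      ext i j
      simp [Matrix.mul_diagonal, Matrix.submatrix_apply]
    rw [hsub, Matrix.det_mul, Matrix.det_diagonal,
      det_submatrix_one u σ hdiag htri e he, one_mul, prod_single]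
  -- right side minor has valuation ≥ s
  have hR : Vge (∑ i : Fin k, ν (e i))
      (((a.map φ * D * b.map φ).submatrix e e).det) := by
    have hfact : (a.map φ * D * b.map φ).submatrix e e
        = ((a.map φ * D).submatrix e id) * ((b.map φ).submatrix id e) := by
      rw [← Matrix.submatrix_mul_equiv (a.map φ * D) (b.map φ) e (Equiv.refl (Fin n)) e]; rfl
    rw [hfact, det_mul_expand]
    apply Vge.sum
    intro g _
    by_cases hg : Function.Injective g
    · have h1 : Vge (∑ i : Fin k, ν (g i))
          (∏ i : Fin k, ((a.map φ * D).submatrix e id) i (g i)) := by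
        apply Vge.prod
        intro i _
        have hent : ((a.map φ * D).submatrix e id) i (g i)
            = φ (a (e i) (g i)) * HahnSeries.single (ν (g i)) 1 := by
          simp [hD, Matrix.submatrix_apply, Matrix.mul_diagonal, Matrix.map_apply]
        rw [hent]
        have := Vge.mul (Vge.ofPS (a (e i) (g i))) (Vge.single (ν (g i)) (1 : C))
        rwa [zero_add] at this
      have h2 : Vge 0 ((((b.map φ).submatrix id e)).submatrix g id).det := by
        have hq : (((b.map φ).submatrix id e)).submatrix g id = (b.submatrix g e).map φ := by
          rw [Matrix.submatrix_submatrix, Matrix.submatrix_map]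
          rfl
        rw [hq, ← RingHom.mapMatrix_apply, ← RingHom.map_det]
        exact Vge.ofPS _
      have h3 := Vge.mul h1 h2
      rw [add_zero] at h3
      exact h3.mono (sum_antitone_ge ν hν hk g hg)
    · obtain ⟨i, j, hgij, hij⟩ := Function.not_injective_iff.mp hg
      have hdet : ((((b.map φ).submatrix id e)).submatrix g id).det = 0 := by
        apply Matrix.det_zero_of_row_eq hij
        funext c
        simp [Matrix.submatrix_apply, hgij]
      rw [hdet, mul_zero]
      exact Vge.zero _
  -- compare coefficients
  have hEq : (HahnSeries.single (∑ i : Fin k, μ (e i)) 1 : LaurentSeries C)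
      = ((a.map φ * D * b.map φ).submatrix e e).det := by
    rw [← hL, heq]
  refine le_of_not_gt fun hlt => ?_
  have h0 := hR _ hlt
  rw [← hEq, HahnSeries.coeff_single_same] at h0
  exact one_ne_zero h0

end KeyStep



/-- Types go up when multiplying by unipotent elements: if `u ∈ GL_n(C((t)))` is unipotent
and triangular with respect to some ordering of the coordinates (i.e. lies in the unipotent
radical of a Borel containing the diagonal torus), `μ` is dominant, and
`u·t^μ ∈ GL_n(C[[t]])·t^ν·GL_n(C[[t]])` with `ν` dominant, then `μ ≤ ν` in the dominance
order: all partial sums of `ν` dominate those of `μ`, with equal total sums. -/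
theorem dominance_of_unipotent_times_torus
    (C : Type*) [Field C] (n : ℕ) (μ ν : Fin n → ℤ) (hμ : Antitone μ) (hν : Antitone ν)
    (u : Matrix (Fin n) (Fin n) (LaurentSeries C))
    (hdiag : ∀ i, u i i = 1)
    (htri : ∃ σ : Equiv.Perm (Fin n), ∀ i j : Fin n, σ.symm j < σ.symm i → u i j = 0)
    (hcell : ∃ a b : GL (Fin n) (PowerSeries C),
        u * Matrix.diagonal (fun i =>
            (algebraMap (PowerSeries C) (LaurentSeries C) PowerSeries.X) ^ (μ i)) =
          ((a : Matrix (Fin n) (Fin n) (PowerSeries C)).map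
              (algebraMap (PowerSeries C) (LaurentSeries C))) *
            Matrix.diagonal (fun i =>
              (algebraMap (PowerSeries C) (LaurentSeries C) PowerSeries.X) ^ (ν i)) *
            ((b : Matrix (Fin n) (Fin n) (PowerSeries C)).map
              (algebraMap (PowerSeries C) (LaurentSeries C)))) :
    (∀ K : ℕ,
        ∑ i ∈ Finset.univ.filter (fun i : Fin n => (i : ℕ) < K), μ i ≤
        ∑ i ∈ Finset.univ.filter (fun i : Fin n => (i : ℕ) < K), ν i) ∧
      (∑ i, μ i = ∑ i, ν i) := by
  classical
  obtain ⟨σ, htri⟩ := htri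
  obtain ⟨a, b, heq⟩ := hcell
  simp only [algX_zpow] at heq
  set φ := algebraMap (PowerSeries C) (LaurentSeries C) with hφ
  set A : Matrix (Fin n) (Fin n) (PowerSeries C) := (a : Matrix (Fin n) (Fin n) (PowerSeries C))
    with hA
  set B : Matrix (Fin n) (Fin n) (PowerSeries C) := (b : Matrix (Fin n) (Fin n) (PowerSeries C))
    with hB
  -- total sums are equal
  have hu : u.det = 1 := by
    have := det_submatrix_one u σ hdiag htri id Function.injective_id
    rwa [Matrix.submatrix_id_id] at this
  have htot : ∑ i, μ i = ∑ i, ν i := by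
    have hdet := congrArg Matrix.det heq
    rw [Matrix.det_mul, Matrix.det_diagonal, prod_single, hu, one_mul,
      Matrix.det_mul, Matrix.det_mul, Matrix.det_diagonal, prod_single,
      ← RingHom.mapMatrix_apply, ← RingHom.mapMatrix_apply,
      ← RingHom.map_det, ← RingHom.map_det] at hdet
    have hre : φ A.det * HahnSeries.single (∑ i, ν i) 1 * φ B.det
        = HahnSeries.single (∑ i, ν i) 1 * φ (A.det * B.det) := by
      rw [_root_.map_mul]; ring
    rw [hre] at hdet
    by_contra hne
    have h1 := congrArg (fun f : LaurentSeries C => f.coeff (∑ i, ν i)) hdet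
    have hc : ((HahnSeries.single (∑ i, ν i) 1 : LaurentSeries C)
        * φ (A.det * B.det)).coeff (0 + ∑ i, ν i) = 1 * (φ (A.det * B.det)).coeff 0 :=
      HahnSeries.coeff_single_mul_add
    rw [zero_add] at hc
    rw [hc, one_mul, coeff_ofPS_zero, _root_.map_mul,
      HahnSeries.coeff_single_of_ne (fun h => hne h.symm)] at h1
    have ha0 : PowerSeries.constantCoeff A.det ≠ 0 :=
      isUnit_iff_ne_zero.mp (PowerSeries.isUnit_constantCoeff _
        ((Matrix.isUnit_iff_isUnit_det _).mp a.isUnit))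
    have hb0 : PowerSeries.constantCoeff B.det ≠ 0 :=
      isUnit_iff_ne_zero.mp (PowerSeries.isUnit_constantCoeff _
        ((Matrix.isUnit_iff_isUnit_det _).mp b.isUnit))
    exact mul_ne_zero ha0 hb0 h1.symm
  refine ⟨fun K => ?_, htot⟩
  set K' := min K n with hK'
  have hK'n : K' ≤ n := min_le_right _ _
  set k := n - K' with hkdef
  have hkn : k ≤ n := Nat.sub_le _ _
  -- rewrite filters with K'
  have hfilter : (Finset.univ.filter (fun i : Fin n => (i : ℕ) < K))
      = Finset.univ.filter (fun i : Fin n => (i : ℕ) < K') := by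
    apply Finset.filter_congr
    intro i _
    constructor <;> intro h <;> omega
  -- complement sums as sums over Fin k
  have hks : ∀ f : Fin n → ℤ,
      (∑ i ∈ Finset.univ.filter (fun i : Fin n => ¬ ((i : ℕ) < K')), f i)
        = ∑ j : Fin k, f ⟨n - k + (j : ℕ), by omega⟩ := by
    intro f
    refine Finset.sum_bij'
      (fun (x : Fin n) (hx : x ∈ Finset.univ.filter (fun i : Fin n => ¬ ((i : ℕ) < K'))) =>
        (⟨(x : ℕ) - K', by
          have := Finset.mem_filter.mp hx
          have := x.isLt
          omega⟩ : Fin k))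
      (fun (j : Fin k) _ => (⟨n - k + (j : ℕ), by omega⟩ : Fin n))
      ?_ ?_ ?_ ?_ ?_
    · intro x hx
      exact Finset.mem_univ _
    · intro j hj
      simp only [Finset.mem_filter, Finset.mem_univ, true_and]
      omega
    · intro x hx
      have := Finset.mem_filter.mp hx
      exact Fin.ext (by simp; omega)
    · intro j hj
      exact Fin.ext (by simp; omega)
    · intro x hx
      have := Finset.mem_filter.mp hx
      congr 1
      exact Fin.ext (by simp; omega)
  have hkey := key_step hkn μ ν hν u hdiag σ htri A B heq
  rw [← hks μ, ← hks ν] at hkey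
  have hμsplit := Finset.sum_filter_add_sum_filter_not Finset.univ
    (fun i : Fin n => (i : ℕ) < K') μ
  have hνsplit := Finset.sum_filter_add_sum_filter_not Finset.univ
    (fun i : Fin n => (i : ℕ) < K') ν
  rw [hfilter]
  omega
end

section
/- Let C be a field and V = C^n. Let L ⊆ V ⊗_C C((t)) be a C[[t]]-lattice that is stable under the C^×-action induced by t ↦ λ t (acting C-linearly on V and by substitution on Laurent series) for every λ ∈ C^×, where C is infinite. Then there is a unique decreasing, separated, exhaustive filtration F^• of V by C-subspaces such that L = Σ_{i∈ℤ} t^{-i} C[[t]] · (F^i V). (Rees construction: equivariant lattices correspond to filtrations.) -/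
/-- The coefficient-scaling action of `λ ∈ C^×` on Laurent series, induced by `t ↦ λt`:
`(Σ aₙ tⁿ) ↦ Σ λⁿ aₙ tⁿ`. -/
noncomputable def scaleLaurent {C : Type*} [Field C] (l : C) (f : LaurentSeries C) :
    LaurentSeries C where
  coeff := fun n => l ^ n * f.coeff n
  isPWO_support' := by
    refine f.isPWO_support'.mono ?_
    intro x hx
    simp only [Function.mem_support] at hx ⊢
    intro h
    exact hx (by rw [h, mul_zero])

set_option maxHeartbeats 1000000

namespace ReesAux

variable {C : Type*} [Field C] {m : ℕ}

lemma Cmul (c : C) (x : LaurentSeries C) : HahnSeries.C c * x = c • x := by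
  ext n
  have h := HahnSeries.coeff_single_mul_add (r := c) (x := x) (a := n) (b := (0:ℤ))
  simp only [add_zero] at h
  rw [HahnSeries.C_apply, h, HahnSeries.coeff_smul, smul_eq_mul]

instance : IsScalarTower C (PowerSeries C) (LaurentSeries C) := by
  constructor
  intro c f g
  show HahnSeries.ofPowerSeries ℤ C (c • f) * g = c • (HahnSeries.ofPowerSeries ℤ C f * g)
  rw [PowerSeries.smul_eq_C_mul, map_mul, HahnSeries.ofPowerSeries_C, mul_assoc, Cmul]

lemma ops_coeff_neg (f : PowerSeries C) (n : ℤ) (hn : n < 0) :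
    (HahnSeries.ofPowerSeries ℤ C f).coeff n = 0 := by
  rw [HahnSeries.ofPowerSeries_apply]
  apply HahnSeries.embDomain_notin_range
  rintro ⟨k, hk⟩
  have : ((k : ℕ) : ℤ) = n := hk
  omega

lemma ops_coeff (f : PowerSeries C) (n : ℤ) :
    (HahnSeries.ofPowerSeries ℤ C f).coeff n
      = if 0 ≤ n then PowerSeries.coeff n.toNat f else 0 := by
  split_ifs with h
  · rw [show n = ((n.toNat : ℕ) : ℤ) by omega, HahnSeries.ofPowerSeries_apply_coeff]; simp [sup_eq_left.mpr h]
  · exact ops_coeff_neg f n (by omega)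

/-- `sl n v` is the vector of monomials `v · tⁿ`. -/
noncomputable def sl (n : ℤ) (v : Fin m → C) : Fin m → LaurentSeries C := fun j => HahnSeries.single n (v j)

lemma smul_apply' (f : PowerSeries C) (x : Fin m → LaurentSeries C) (j : Fin m) :
    (f • x) j = HahnSeries.ofPowerSeries ℤ C f * x j := rfl

lemma sl_zero (n : ℤ) : sl (m := m) n (0 : Fin m → C) = 0 := by
  funext j; simp [sl]

lemma sl_add (n : ℤ) (v w : Fin m → C) : sl n (v + w) = sl n v + sl n w := by
  funext j
  ext k
  simp only [sl, Pi.add_apply, HahnSeries.coeff_add, HahnSeries.coeff_single]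
  split_ifs <;> simp

lemma sl_smul (n : ℤ) (c : C) (v : Fin m → C) : sl n (c • v) = c • sl n v := by
  funext j
  ext k
  simp only [sl, Pi.smul_apply, HahnSeries.coeff_smul, HahnSeries.coeff_single, smul_eq_mul]
  split_ifs <;> simp

lemma smul_sl_C (c : C) (n : ℤ) (v : Fin m → C) :
    (PowerSeries.C c) • sl n v = sl n (c • v) := by
  funext j
  rw [smul_apply', HahnSeries.ofPowerSeries_C, Cmul]
  ext k
  simp only [sl, HahnSeries.coeff_smul, HahnSeries.coeff_single, smul_eq_mul]
  split_ifs <;> simp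

lemma smul_sl_X (k : ℕ) (n : ℤ) (v : Fin m → C) :
    ((PowerSeries.X : PowerSeries C) ^ k) • sl n v = sl ((k : ℤ) + n) v := by
  funext j
  rw [smul_apply', HahnSeries.ofPowerSeries_X_pow, sl, sl, HahnSeries.single_mul_single, one_mul]

/-- Coefficient extraction as a `C`-linear map. -/
def coeffMap (n : ℤ) : (Fin m → LaurentSeries C) →ₗ[C] (Fin m → C) where
  toFun x := fun j => (x j).coeff n
  map_add' x y := by funext j; simp [HahnSeries.coeff_add]
  map_smul' c x := by funext j; simp [HahnSeries.coeff_smul]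

lemma coeffMap_apply (n : ℤ) (x : Fin m → LaurentSeries C) (j : Fin m) :
    coeffMap n x j = (x j).coeff n := rfl

lemma coeffMap_sl (k n : ℤ) (v : Fin m → C) :
    coeffMap k (sl n v) = if k = n then v else 0 := by
  funext j
  rw [coeffMap_apply, sl, HahnSeries.coeff_single]
  split_ifs <;> simp

/-- Coefficient of a product with a power series, for a lower-bounded Laurent series. -/
lemma mul_coeff_bdd (f : PowerSeries C) (g : LaurentSeries C) (b k : ℤ)
    (hg : ∀ a, a < b → g.coeff a = 0) :
    (HahnSeries.ofPowerSeries ℤ C f * g).coeff k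
      = ∑ q ∈ Finset.Icc b k, (HahnSeries.ofPowerSeries ℤ C f).coeff (k - q) * g.coeff q := by
  rw [HahnSeries.coeff_mul]
  refine Finset.sum_of_injOn (fun ij => ij.2) ?_ ?_ ?_ ?_
  · intro p hp q hq hpq
    simp only [Finset.coe_sort_coe, Finset.mem_coe, Finset.mem_addAntidiagonal] at hp hq
    have hpq' : p.2 = q.2 := hpq
    have : p.1 = q.1 := by omega
    exact Prod.ext this hpq
  · intro ij hij
    simp only [Finset.coe_sort_coe, Finset.mem_coe, Finset.mem_addAntidiagonal,
      Function.mem_support] at hij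
    simp only [Finset.coe_Icc, Set.mem_Icc]
    constructor
    · by_contra h
      exact hij.2.1 (hg ij.2 (by omega))
    · by_contra h
      exact hij.1 (ops_coeff_neg f ij.1 (by omega))
  · intro q hq hq'
    by_contra h
    have h1 : (HahnSeries.ofPowerSeries ℤ C f).coeff (k - q) ≠ 0 := fun h0 => h (by rw [h0, zero_mul])
    have h2 : g.coeff q ≠ 0 := fun h0 => h (by rw [h0, mul_zero])
    exact hq' ⟨(k - q, q), Finset.mem_addAntidiagonal.mpr ⟨h1, h2, by omega⟩, rfl⟩
  · intro ij hij
    simp only [Finset.mem_addAntidiagonal] at hij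
    rw [show k - ij.2 = ij.1 by omega]

lemma mul_bdd_support (f : PowerSeries C) (g : LaurentSeries C) (b k : ℤ)
    (hg : ∀ a, a < b → g.coeff a = 0) (hk : k < b) :
    (HahnSeries.ofPowerSeries ℤ C f * g).coeff k = 0 := by
  rw [mul_coeff_bdd f g b k hg, Finset.Icc_eq_empty (by omega), Finset.sum_empty]

/-- Lower bound on supports is preserved by `PowerSeries`-span. -/
lemma span_bdd (s : Set (Fin m → LaurentSeries C)) (b : ℤ)
    (hs : ∀ x ∈ s, ∀ (j : Fin m) (k : ℤ), k < b → (x j).coeff k = 0) :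
    ∀ x ∈ Submodule.span (PowerSeries C) s, ∀ (j : Fin m) (k : ℤ), k < b → (x j).coeff k = 0 := by
  intro x hx
  induction hx using Submodule.span_induction with
  | mem x h => exact hs x h
  | zero => intro j k _; simp
  | add x y _ _ ihx ihy =>
    intro j k hk
    show (x j + y j).coeff k = 0
    rw [HahnSeries.coeff_add, ihx j k hk, ihy j k hk, add_zero]
  | smul f x _ ih =>
    intro j k hk
    show (HahnSeries.ofPowerSeries ℤ C f * x j).coeff k = 0
    exact mul_bdd_support f (x j) b k (fun a ha => ih j a ha) hk

/-- A finite set of Laurent-series vectors has a common lower bound for supports. -/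
lemma finset_bdd (t : Finset (Fin m → LaurentSeries C)) :
    ∃ b : ℤ, ∀ x ∈ t, ∀ (j : Fin m) (k : ℤ), k < b → (x j).coeff k = 0 := by
  refine ⟨-(t.sup fun x => Finset.univ.sup fun j => (x j).order.natAbs : ℕ), ?_⟩
  intro x hx j k hk
  apply HahnSeries.coeff_eq_zero_of_lt_order
  have h1 : (x j).order.natAbs ≤ Finset.univ.sup fun j => (x j).order.natAbs :=
    Finset.le_sup (f := fun j => ((x j).order).natAbs) (Finset.mem_univ j)
  have h2 : (Finset.univ.sup fun j => (x j).order.natAbs)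
      ≤ t.sup fun x => Finset.univ.sup fun j => (x j).order.natAbs :=
    Finset.le_sup (f := fun x => Finset.univ.sup fun j => ((x j).order).natAbs) hx
  refine lt_of_lt_of_le hk ?_
  have h3 : ((x j).order.natAbs : ℤ)
      ≤ ((t.sup fun x => Finset.univ.sup fun j => (x j).order.natAbs : ℕ) : ℤ) :=
    Int.ofNat_le.mpr (le_trans h1 h2)
  have h4 : -(((x j).order.natAbs : ℕ) : ℤ) ≤ (x j).order := by
    clear h1 h2 hk h3 t hx
    omega
  calc -((t.sup fun x => Finset.univ.sup fun j => (x j).order.natAbs : ℕ) : ℤ)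
      ≤ -(((x j).order.natAbs : ℕ) : ℤ) := neg_le_neg h3
    _ ≤ (x j).order := h4

/-- A lower bound for a single Laurent series. -/
lemma single_bdd (g : LaurentSeries C) : ∃ b : ℤ, ∀ k : ℤ, k < b → g.coeff k = 0 :=
  ⟨g.order, fun _ hk => HahnSeries.coeff_eq_zero_of_lt_order hk⟩

/-- A Laurent series supported in degrees `≥ 0` is a power series. -/
lemma exists_ofPowerSeries (g : LaurentSeries C) (hg : ∀ k : ℤ, k < 0 → g.coeff k = 0) :
    ∃ f : PowerSeries C, HahnSeries.ofPowerSeries ℤ C f = g := by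
  refine ⟨PowerSeries.mk fun a => g.coeff (a : ℤ), ?_⟩
  ext k
  rw [ops_coeff]
  split_ifs with h
  · rw [PowerSeries.coeff_mk]
    congr 1
    omega
  · exact (hg k (by omega)).symm



/-- `sl n` as a `C`-linear map. -/
noncomputable def slL (n : ℤ) : (Fin m → C) →ₗ[C] (Fin m → LaurentSeries C) where
  toFun := sl n
  map_add' := sl_add n
  map_smul' c v := by simpa using sl_smul n c v

section Lattice

variable (L : Submodule (PowerSeries C) (Fin m → LaurentSeries C))

lemma L_bdd (hFG : L.FG) :
    ∃ b : ℤ, ∀ x ∈ L, ∀ (j : Fin m) (k : ℤ), k < b → (x j).coeff k = 0 := by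
  obtain ⟨t, ht⟩ := hFG
  obtain ⟨b, hb⟩ := finset_bdd t
  refine ⟨b, fun x hx => ?_⟩
  rw [← ht] at hx
  exact span_bdd (↑t) b (fun y hy => hb y hy) x hx


/-- Any vector of Laurent series supported in degrees `≥ n` lies in the span of
monomial vectors of degree `n`. -/
lemma tail_mem_span (x : Fin m → LaurentSeries C) (n : ℤ)
    (h : ∀ (j : Fin m) (k : ℤ), k < n → (x j).coeff k = 0) :
    x ∈ Submodule.span (PowerSeries C) {y | ∃ v : Fin m → C, y = sl n v} := by
  have hx : x = ∑ j : Fin m,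
      (PowerSeries.mk fun a => (x j).coeff (n + a)) • sl n (Pi.single j 1) := by
    funext j'
    rw [Finset.sum_apply]
    rw [Finset.sum_eq_single j']
    · ext k
      rw [smul_apply']
      rw [show sl n (Pi.single j' (1:C)) j' = HahnSeries.single n (1:C) by
        simp [sl]]
      have hm := HahnSeries.coeff_mul_single_add
        (r := (1:C)) (x := HahnSeries.ofPowerSeries ℤ C (PowerSeries.mk fun a => (x j').coeff (n + a)))
        (a := k - n) (b := n)
      rw [show k - n + n = k by omega] at hm
      rw [hm, mul_one, ops_coeff]
      split_ifs with hkn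
      · rw [PowerSeries.coeff_mk]
        congr 1
        omega
      · exact h j' k (by omega)
    · intro j _ hj
      rw [smul_apply']
      rw [show sl n (Pi.single j (1:C)) j' = 0 by
        simp [sl, Pi.single_eq_of_ne (Ne.symm hj)]]
      rw [mul_zero]
    · intro hj; exact absurd (Finset.mem_univ j') hj
  rw [hx]
  exact Submodule.sum_mem _ fun j _ =>
    Submodule.smul_mem _ _ (Submodule.subset_span ⟨Pi.single j 1, rfl⟩)

lemma scalar_promote (c : LaurentSeries C) (hc : ∀ k : ℤ, k < 0 → c.coeff k = 0)
    (x : Fin m → LaurentSeries C) (hx : x ∈ L) : c • x ∈ L := by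
  obtain ⟨f, hf⟩ := exists_ofPowerSeries c hc
  rw [← hf, show HahnSeries.ofPowerSeries ℤ C f
      = algebraMap (PowerSeries C) (LaurentSeries C) f from rfl, algebraMap_smul]
  exact L.smul_mem f hx

lemma smul_single_mono (x : Fin m → LaurentSeries C) (n n' : ℕ) (hn : n ≤ n')
    (hx : (HahnSeries.single (n:ℤ) (1:C)) • x ∈ L) :
    (HahnSeries.single (n':ℤ) (1:C)) • x ∈ L := by
  have key : (HahnSeries.single ((n':ℤ)) (1:C))
      = HahnSeries.ofPowerSeries ℤ C (PowerSeries.X ^ (n' - n)) * HahnSeries.single (n:ℤ) 1 := by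
    rw [HahnSeries.ofPowerSeries_X_pow, HahnSeries.single_mul_single, one_mul,
      show ((n' - n : ℕ):ℤ) + (n:ℤ) = (n':ℤ) by omega]
  rw [key, mul_smul, show HahnSeries.ofPowerSeries ℤ C (PowerSeries.X ^ (n' - n))
      = algebraMap (PowerSeries C) (LaurentSeries C) _ from rfl, algebraMap_smul]
  exact L.smul_mem _ hx

lemma exists_N (hspan : Submodule.span (LaurentSeries C)
      (L : Set (Fin m → LaurentSeries C)) = ⊤) :
    ∃ N : ℤ, ∀ v : Fin m → C, sl N v ∈ L := by
  have key : ∀ z ∈ Submodule.span (LaurentSeries C) (L : Set (Fin m → LaurentSeries C)),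
      ∃ n : ℕ, (HahnSeries.single ((n:ℕ):ℤ) (1:C)) • z ∈ L := by
    intro z hz
    induction hz using Submodule.span_induction with
    | mem x h =>
      refine ⟨0, ?_⟩
      rw [show (HahnSeries.single ((0:ℕ):ℤ) (1:C)) = 1 from rfl, one_smul]
      exact h
    | zero => exact ⟨0, by rw [smul_zero]; exact L.zero_mem⟩
    | add x y _ _ ihx ihy =>
      obtain ⟨n1, h1⟩ := ihx
      obtain ⟨n2, h2⟩ := ihy
      refine ⟨max n1 n2, ?_⟩
      rw [smul_add]
      exact L.add_mem (smul_single_mono L x n1 _ (le_max_left _ _) h1)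
        (smul_single_mono L y n2 _ (le_max_right _ _) h2)
    | smul c x _ ih =>
      obtain ⟨n1, h1⟩ := ih
      obtain ⟨b, hb⟩ := single_bdd c
      refine ⟨b.natAbs + n1, ?_⟩
      have comp : ∀ (d : LaurentSeries C) (y : Fin m → LaurentSeries C) (j' : Fin m),
          (d • y) j' = d * y j' := fun _ _ _ => rfl
      have key2 : (HahnSeries.single (((b.natAbs + n1 : ℕ)):ℤ) (1:C)) • (c • x)
          = (HahnSeries.single ((b.natAbs:ℕ):ℤ) (1:C) * c) • ((HahnSeries.single ((n1:ℕ):ℤ) (1:C)) • x) := by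
        funext j'
        rw [comp, comp, comp, comp]
        rw [show (HahnSeries.single (((b.natAbs + n1 : ℕ)):ℤ) (1:C))
            = HahnSeries.single ((b.natAbs:ℕ):ℤ) (1:C) * HahnSeries.single ((n1:ℕ):ℤ) (1:C) by
          rw [HahnSeries.single_mul_single, one_mul,
            show ((b.natAbs:ℕ):ℤ) + ((n1:ℕ):ℤ) = (((b.natAbs + n1 : ℕ)):ℤ) by omega]]
        ring
      rw [key2]
      refine scalar_promote L _ ?_ _ h1
      intro k hk
      have h3 := HahnSeries.coeff_single_mul_add (r := (1:C)) (x := c)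
        (a := k - (b.natAbs:ℤ)) (b := ((b.natAbs:ℕ):ℤ))
      rw [show k - (b.natAbs:ℤ) + ((b.natAbs:ℕ):ℤ) = k by omega] at h3
      rw [h3, one_mul]
      exact hb _ (by omega)
  have he : ∀ j : Fin m, ∃ n : ℕ, (HahnSeries.single ((n:ℕ):ℤ) (1:C)) • sl 0 (Pi.single j 1) ∈ L := by
    intro j
    exact key _ (by rw [hspan]; exact Submodule.mem_top)
  choose nf hnf using he
  have hsl : ∀ j : Fin m, sl ((Finset.univ.sup nf : ℕ):ℤ) (Pi.single j 1) ∈ L := by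
    intro j
    have h5 := smul_single_mono L _ (nf j) (Finset.univ.sup nf)
      (Finset.le_sup (Finset.mem_univ j)) (hnf j)
    have comp : ∀ (d : LaurentSeries C) (y : Fin m → LaurentSeries C) (j' : Fin m),
        (d • y) j' = d * y j' := fun _ _ _ => rfl
    have heq2 : (HahnSeries.single ((Finset.univ.sup nf : ℕ):ℤ) (1:C)) • sl (0:ℤ) ((Pi.single j 1 : Fin m → C))
        = sl ((Finset.univ.sup nf : ℕ):ℤ) ((Pi.single j 1 : Fin m → C)) := by
      funext j'
      rw [comp]
      simp only [sl]
      rw [HahnSeries.single_mul_single, add_zero, one_mul]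
    rwa [heq2] at h5
  refine ⟨((Finset.univ.sup nf : ℕ):ℤ), fun v => ?_⟩
  have hsingle : ∀ j : Fin m, (Pi.single j (v j) : Fin m → C) = v j • (Pi.single j (1:C) : Fin m → C) := by
    intro j
    funext j'
    by_cases h : j' = j
    · subst h; simp
    · simp [Pi.single_eq_of_ne h]
  have hv : sl ((Finset.univ.sup nf : ℕ):ℤ) v
      = ∑ j : Fin m, (PowerSeries.C (v j)) • sl ((Finset.univ.sup nf : ℕ):ℤ) (Pi.single j 1) := by
    calc sl ((Finset.univ.sup nf : ℕ):ℤ) v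
        = slL ((Finset.univ.sup nf : ℕ):ℤ) (∑ j : Fin m, Pi.single j (v j)) := by
          rw [Finset.univ_sum_single]; rfl
      _ = ∑ j : Fin m, slL ((Finset.univ.sup nf : ℕ):ℤ) (Pi.single j (v j)) :=
          map_sum (slL ((Finset.univ.sup nf : ℕ):ℤ)) _ _
      _ = ∑ j : Fin m, (PowerSeries.C (v j)) • sl ((Finset.univ.sup nf : ℕ):ℤ) (Pi.single j 1) := by
          refine Finset.sum_congr rfl fun j _ => ?_
          rw [smul_sl_C, ← hsingle j]
          rfl
  rw [hv]
  exact Submodule.sum_mem _ fun j _ => L.smul_mem _ (hsl j)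

/-- The filtration associated to a lattice. -/
noncomputable def F0 (i : ℤ) : Submodule C (Fin m → C) where
  carrier := {v | sl (-i) v ∈ L}
  add_mem' := by
    intro v w hv hw
    show sl (-i) (v + w) ∈ L
    rw [sl_add]
    exact L.add_mem hv hw
  zero_mem' := by
    show sl (-i) (0 : Fin m → C) ∈ L
    rw [sl_zero]
    exact L.zero_mem
  smul_mem' := by
    intro c v hv
    show sl (-i) (c • v) ∈ L
    rw [← smul_sl_C]
    exact L.smul_mem _ hv

lemma mem_F0 (i : ℤ) (v : Fin m → C) : v ∈ F0 L i ↔ sl (-i) v ∈ L := Iff.rfl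

lemma F0_dec (i : ℤ) : F0 L (i + 1) ≤ F0 L i := by
  intro v hv
  rw [mem_F0] at hv ⊢
  have := L.smul_mem (PowerSeries.X ^ 1) hv
  rw [smul_sl_X] at this
  rw [show -i = ((1:ℕ):ℤ) + -(i+1) by omega]
  exact this

lemma dec_mono (F : ℤ → Submodule C (Fin m → C)) (hdec : ∀ i, F (i + 1) ≤ F i)
    (i j : ℤ) (hij : i ≤ j) : F j ≤ F i := by
  have key : ∀ n : ℕ, F (i + n) ≤ F i := by
    intro n
    induction n with
    | zero => simp
    | succ n ih =>
      refine le_trans ?_ ih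
      rw [show (i + ((n+1:ℕ):ℤ)) = (i + (n:ℕ)) + 1 by push_cast; ring]
      exact hdec (i + (n:ℕ))
  rw [show j = i + ((j - i).toNat : ℤ) by omega]
  exact key _

/-- Decomposition of a two-sided-bounded vector into its homogeneous components. -/
lemma sum_components (y : Fin m → LaurentSeries C) (B N : ℤ)
    (h : ∀ (j : Fin m) (k : ℤ), (k < B ∨ N ≤ k) → (y j).coeff k = 0) :
    y = ∑ i : Fin (N - B).toNat, sl (B + (i:ℕ)) (coeffMap (B + (i:ℕ)) y) := by
  have key : ∀ k : ℤ, coeffMap k y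
      = coeffMap k (∑ i : Fin (N - B).toNat, sl (B + (i:ℕ)) (coeffMap (B + (i:ℕ)) y)) := by
    intro k
    rw [map_sum]
    by_cases hk : B ≤ k ∧ k < N
    · have hd : (k - B).toNat < (N - B).toNat := by omega
      rw [Finset.sum_eq_single (⟨(k - B).toNat, hd⟩ : Fin (N - B).toNat)]
      · rw [coeffMap_sl, if_pos (show k = B + (((⟨(k - B).toNat, hd⟩ : Fin (N - B).toNat)):ℕ) by
          show k = B + ((k - B).toNat : ℤ)
          omega)]
        rw [show (B + (((⟨(k - B).toNat, hd⟩ : Fin (N - B).toNat)):ℕ) : ℤ) = k from by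
          show B + ((k - B).toNat : ℤ) = k
          omega]
      · intro i _ hi
        rw [coeffMap_sl, if_neg]
        intro hki
        apply hi
        apply Fin.ext
        simp only []
        omega
      · intro hmem; exact absurd (Finset.mem_univ _) hmem
    · have h0 : coeffMap k y = 0 := by
        funext j
        exact h j k (by omega)
      rw [h0]
      symm
      apply Finset.sum_eq_zero
      intro i _
      rw [coeffMap_sl, if_neg]
      intro hki
      have hi : ((i:ℕ):ℤ) < N - B := by
        have := i.isLt
        omega
      omega
  funext j
  ext k
  exact congrFun (key k) j

lemma IsST : IsScalarTower C (PowerSeries C) (Fin m → LaurentSeries C) := inferInstance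

/-- Homogeneous components of a bounded element of an equivariant lattice stay in the lattice. -/
lemma homog_mem
    (hstab : ∀ l : C, l ≠ 0 → ∀ x ∈ L, (fun i => scaleLaurent l (x i)) ∈ L)
    [Infinite C]
    (y : Fin m → LaurentSeries C) (hy : y ∈ L) (B N : ℤ)
    (h : ∀ (j : Fin m) (k : ℤ), (k < B ∨ N ≤ k) → (y j).coeff k = 0) (n : ℤ) :
    sl n (coeffMap n y) ∈ L := by
  by_cases hn : B ≤ n ∧ n < N
  · -- Vandermonde argument
    set d := (N - B).toNat with hd
    have hs : ({(0:C)}ᶜ : Set C).Infinite := (Set.finite_singleton 0).infinite_compl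
    set emb := hs.natEmbedding with hemb
    set lam : Fin d → C := fun i => (emb (i:ℕ) : C) with hlam
    have hlam_ne : ∀ i, lam i ≠ 0 := fun i => (emb (i:ℕ)).2
    have hlam_inj : Function.Injective lam := by
      intro a b hab
      have := emb.injective (Subtype.ext hab)
      exact Fin.ext (by omega)
    set u : Fin d → (Fin m → LaurentSeries C) :=
      fun i => sl (B + (i:ℕ)) (coeffMap (B + (i:ℕ)) y) with hu
    set w : Fin d → (Fin m → LaurentSeries C) :=
      fun s => (lam s) ^ (-B) • (fun j => scaleLaurent (lam s) (y j)) with hw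
    have hwL : ∀ s, w s ∈ L := fun s =>
      L.smul_of_tower_mem _ (hstab (lam s) (hlam_ne s) y hy)
    have hwcoeff : ∀ (s : Fin d) (j : Fin m) (k : ℤ),
        (w s j).coeff k = (lam s) ^ (k - B) * (y j).coeff k := by
      intro s j k
      rw [hw]
      show ((lam s) ^ (-B) • (scaleLaurent (lam s) (y j))).coeff k = _
      rw [HahnSeries.coeff_smul, smul_eq_mul]
      show (lam s) ^ (-B) * ((lam s) ^ k * (y j).coeff k) = _
      rw [← mul_assoc, ← zpow_add₀ (hlam_ne s)]
      congr 2
      omega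
    have hwbd : ∀ (s : Fin d) (j : Fin m) (k : ℤ), (k < B ∨ N ≤ k) → (w s j).coeff k = 0 := by
      intro s j k hk
      rw [hwcoeff, h j k hk, mul_zero]
    set A : Matrix (Fin d) (Fin d) C := Matrix.vandermonde lam with hA
    have hident : ∀ s : Fin d, w s = ∑ i : Fin d, A s i • u i := by
      intro s
      have h1 := sum_components (w s) B N (hwbd s)
      rw [show (N - B).toNat = d from rfl] at h1
      rw [h1]
      refine Finset.sum_congr rfl fun i _ => ?_
      have h2 : coeffMap (B + (i:ℕ)) (w s) = (lam s) ^ ((i:ℕ)) • coeffMap (B + (i:ℕ)) y := by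
        funext j
        rw [Pi.smul_apply, coeffMap_apply, coeffMap_apply, hwcoeff, smul_eq_mul,
          show B + ((i:ℕ):ℤ) - B = ((i:ℕ):ℤ) by omega, zpow_natCast]
      rw [h2, sl_smul]
      rfl
    have hdet : IsUnit A.det := by
      rw [hA, Matrix.det_vandermonde]
      apply IsUnit.mk0
      apply Finset.prod_ne_zero_iff.mpr
      intro i _
      apply Finset.prod_ne_zero_iff.mpr
      intro j hj
      rw [Finset.mem_Ioi] at hj
      have hij' : (i:ℕ) < (j:ℕ) := hj
      exact sub_ne_zero_of_ne fun hc => by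
        have := congrArg Fin.val (hlam_inj hc)
        omega
    have huw : ∀ i : Fin d, u i = ∑ s : Fin d, A⁻¹ i s • w s := by
      intro i
      calc u i = ∑ i' : Fin d, ((1 : Matrix (Fin d) (Fin d) C) i i') • u i' := by
            rw [Finset.sum_eq_single i]
            · rw [Matrix.one_apply_eq, one_smul]
            · intro i' _ hi'
              rw [Matrix.one_apply_ne (Ne.symm hi'), zero_smul]
            · intro hmem; exact absurd (Finset.mem_univ _) hmem
        _ = ∑ i' : Fin d, ((A⁻¹ * A) i i') • u i' := by rw [Matrix.nonsing_inv_mul A hdet]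
        _ = ∑ i' : Fin d, ∑ s : Fin d, (A⁻¹ i s * A s i') • u i' := by
            refine Finset.sum_congr rfl fun i' _ => ?_
            rw [Matrix.mul_apply, Finset.sum_smul]
        _ = ∑ s : Fin d, ∑ i' : Fin d, (A⁻¹ i s * A s i') • u i' := Finset.sum_comm
        _ = ∑ s : Fin d, A⁻¹ i s • w s := by
            refine Finset.sum_congr rfl fun s _ => ?_
            rw [hident s, Finset.smul_sum]
            refine Finset.sum_congr rfl fun i' _ => ?_
            rw [smul_smul]
    have huL : ∀ i : Fin d, u i ∈ L := by
      intro i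
      rw [huw i]
      exact Submodule.sum_mem _ fun s _ => L.smul_of_tower_mem _ (hwL s)
    have hni : n = B + ((⟨(n - B).toNat, by omega⟩ : Fin d) : ℕ) := by
      simp only []
      omega
    rw [hni]
    exact huL _
  · have h0 : coeffMap n y = 0 := by
      funext j
      exact h j n (by omega)
    rw [h0, sl_zero]
    exact L.zero_mem

/-- The lattice associated to a filtration (Rees construction). -/
noncomputable def latticeOf (F : ℤ → Submodule C (Fin m → C)) :
    Submodule (PowerSeries C) (Fin m → LaurentSeries C) :=
  ⨆ i : ℤ, Submodule.span (PowerSeries C)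
    {x : Fin m → LaurentSeries C | ∃ v ∈ F i, x = fun j => HahnSeries.single (-i) (v j)}

lemma ext_coeff (F : ℤ → Submodule C (Fin m → C)) (hdec : ∀ i, F (i + 1) ≤ F i)
    (x : Fin m → LaurentSeries C) (hx : x ∈ latticeOf F) (n : ℤ) :
    coeffMap n x ∈ F (-n) := by
  rw [latticeOf, ← Submodule.span_iUnion] at hx
  obtain ⟨t, hts, hxt⟩ := Submodule.mem_span_finite_of_mem_span hx
  obtain ⟨b, hb⟩ := finset_bdd t
  suffices hsuff : (∀ (j : Fin m) (k : ℤ), k < b → (x j).coeff k = 0)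
      ∧ ∀ n : ℤ, coeffMap n x ∈ F (-n) from hsuff.2 n
  clear hx n
  induction hxt using Submodule.span_induction with
  | mem y hy =>
    refine ⟨hb y hy, ?_⟩
    obtain ⟨i, hyG⟩ := Set.mem_iUnion.mp (hts hy)
    simp only [Set.mem_setOf_eq] at hyG
    obtain ⟨v, hvF, hyv⟩ := hyG
    intro n
    rw [show y = sl (-i) v from hyv, coeffMap_sl]
    split_ifs with hni
    · rw [show -n = i by omega]
      exact hvF
    · exact Submodule.zero_mem _
  | zero =>
    refine ⟨by intro j k _; simp, fun n => by rw [map_zero]; exact Submodule.zero_mem _⟩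
  | add y z _ _ ihy ihz =>
    constructor
    · intro j k hk
      show (y j + z j).coeff k = 0
      rw [HahnSeries.coeff_add, ihy.1 j k hk, ihz.1 j k hk, add_zero]
    · intro n
      rw [map_add]
      exact Submodule.add_mem _ (ihy.2 n) (ihz.2 n)
  | smul f y _ ih =>
    constructor
    · intro j k hk
      show (HahnSeries.ofPowerSeries ℤ C f * y j).coeff k = 0
      exact mul_bdd_support f (y j) b k (fun a ha => ih.1 j a ha) hk
    · intro n
      have hrw : coeffMap n (f • y) = ∑ q ∈ Finset.Icc b n,
          ((HahnSeries.ofPowerSeries ℤ C f).coeff (n - q)) • coeffMap q y := by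
        funext j
        rw [coeffMap_apply, smul_apply',
          mul_coeff_bdd f (y j) b n (fun a ha => ih.1 j a ha), Finset.sum_apply]
        refine Finset.sum_congr rfl fun q _ => ?_
        rw [Pi.smul_apply, coeffMap_apply, smul_eq_mul]
      rw [hrw]
      refine Submodule.sum_mem _ fun q hq => ?_
      refine Submodule.smul_mem _ _ (dec_mono F hdec (-n) (-q) ?_ (ih.2 q))
      rw [Finset.mem_Icc] at hq
      omega

lemma latticeOf_le_L : latticeOf (F0 L) ≤ L := by
  apply iSup_le
  intro i
  rw [Submodule.span_le]
  rintro x ⟨v, hv, rfl⟩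
  exact hv

lemma L_le_latticeOf (hFG : L.FG)
    (hspan : Submodule.span (LaurentSeries C) (L : Set (Fin m → LaurentSeries C)) = ⊤)
    (hstab : ∀ l : C, l ≠ 0 → ∀ x ∈ L, (fun i => scaleLaurent l (x i)) ∈ L)
    [Infinite C] :
    L ≤ latticeOf (F0 L) := by
  intro x hx
  obtain ⟨b, hb⟩ := L_bdd L hFG
  obtain ⟨N, hN⟩ := exists_N L hspan
  set B := min b N with hB
  set z : Fin m → LaurentSeries C := fun j =>
    { coeff := fun k => if N ≤ k then (x j).coeff k else 0
      isPWO_support' := (x j).isPWO_support'.mono (by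
        intro k hk
        simp only [Function.mem_support] at hk ⊢
        intro h0
        apply hk
        rw [h0]
        simp) } with hz
  have hz_coeff : ∀ (j : Fin m) (k : ℤ), (z j).coeff k = if N ≤ k then (x j).coeff k else 0 :=
    fun j k => rfl
  have hz_tail : ∀ (j : Fin m) (k : ℤ), k < N → (z j).coeff k = 0 := by
    intro j k hk
    rw [hz_coeff, if_neg (by omega)]
  have hzsp := tail_mem_span z N hz_tail
  have hzL : z ∈ L := by
    refine Submodule.span_le.mpr ?_ hzsp
    rintro y ⟨v, rfl⟩
    exact hN v
  have hzS : z ∈ latticeOf (F0 L) := by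
    refine le_iSup (fun i => Submodule.span (PowerSeries C)
      {x : Fin m → LaurentSeries C | ∃ v ∈ F0 L i, x = fun j => HahnSeries.single (-i) (v j)})
      (-N) ?_
    refine Submodule.span_mono ?_ hzsp
    rintro y ⟨v, rfl⟩
    refine ⟨v, ?_, ?_⟩
    · show sl (-(-N)) v ∈ L
      rw [neg_neg]
      exact hN v
    · funext j
      simp only [neg_neg]
      rfl
  set y : Fin m → LaurentSeries C := x - z with hy
  have hyL : y ∈ L := L.sub_mem hx hzL
  have hy_supp : ∀ (j : Fin m) (k : ℤ), (k < B ∨ N ≤ k) → (y j).coeff k = 0 := by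
    intro j k hk
    have hyc : (y j).coeff k = (x j).coeff k - (z j).coeff k := by
      rw [hy]
      show ((x j) - (z j)).coeff k = _
      rw [HahnSeries.coeff_sub]
    rcases hk with hk | hk
    · rw [hyc, hz_coeff, if_neg (by omega), hb x hx j k (by omega), sub_zero]
    · rw [hyc, hz_coeff, if_pos hk, sub_self]
  have hyS : y ∈ latticeOf (F0 L) := by
    rw [sum_components y B N hy_supp]
    refine Submodule.sum_mem _ fun i _ => ?_
    have hmem : coeffMap (B + ((i:ℕ):ℤ)) y ∈ F0 L (-(B + ((i:ℕ):ℤ))) := by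
      rw [mem_F0, neg_neg]
      exact homog_mem L hstab y hyL B N hy_supp _
    refine le_iSup (fun i => Submodule.span (PowerSeries C)
      {x : Fin m → LaurentSeries C | ∃ v ∈ F0 L i, x = fun j => HahnSeries.single (-i) (v j)})
      (-(B + ((i:ℕ):ℤ))) ?_
    apply Submodule.subset_span
    refine ⟨coeffMap (B + ((i:ℕ):ℤ)) y, hmem, ?_⟩
    funext j
    simp only [neg_neg]
    rfl
  rw [show x = y + z by rw [hy, sub_add_cancel]]
  exact Submodule.add_mem _ hyS hzS

lemma F0_inf (hFG : L.FG) : (⨅ i : ℤ, F0 L i) = ⊥ := by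
  rw [eq_bot_iff]
  intro v hv
  obtain ⟨b, hb⟩ := L_bdd L hFG
  have h1 : sl (b - 1) v ∈ L := by
    have := (Submodule.mem_iInf _).mp hv (1 - b)
    rw [mem_F0] at this
    rwa [show b - 1 = -(1 - b) by omega]
  rw [Submodule.mem_bot]
  funext j
  have h2 := hb _ h1 j (b - 1) (by omega)
  rw [show (sl (b-1) v j).coeff (b-1) = v j by simp [sl]] at h2
  exact h2

lemma F0_sup
    (hspan : Submodule.span (LaurentSeries C) (L : Set (Fin m → LaurentSeries C)) = ⊤) :
    (⨆ i : ℤ, F0 L i) = ⊤ := by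
  obtain ⟨N, hN⟩ := exists_N L hspan
  rw [eq_top_iff]
  intro v _
  apply Submodule.mem_iSup_of_mem (-N)
  rw [mem_F0, neg_neg]
  exact hN v

end Lattice


end ReesAux

/-- Rees construction: a `C[[t]]`-lattice `L` in `Cⁿ ⊗ C((t))` that is stable under the
scaling action `t ↦ λt` for every `λ ∈ C^×` (`C` infinite) comes from a unique decreasing,
separated, exhaustive filtration `F` of `Cⁿ` by subspaces, via
`L = Σ_{i∈ℤ} t⁻ⁱ C[[t]] · (FⁱV)`. -/
theorem equivariant_lattice_comes_from_filtration
    (C : Type*) [Field C] [Infinite C] (m : ℕ)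
    (L : Submodule (PowerSeries C) (Fin m → LaurentSeries C))
    (hFG : L.FG)
    (hspan : Submodule.span (LaurentSeries C) (L : Set (Fin m → LaurentSeries C)) = ⊤)
    (hstab : ∀ l : C, l ≠ 0 → ∀ x ∈ L, (fun i => scaleLaurent l (x i)) ∈ L) :
    ∃! F : ℤ → Submodule C (Fin m → C),
      ((∀ i, F (i + 1) ≤ F i) ∧ (⨅ i, F i) = ⊥ ∧ (⨆ i, F i) = ⊤) ∧
        L = ⨆ i : ℤ, Submodule.span (PowerSeries C)
          {x : Fin m → LaurentSeries C |
            ∃ v ∈ F i, x = fun j => HahnSeries.single (-i) (v j)} := by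
  refine ⟨ReesAux.F0 L, ⟨⟨ReesAux.F0_dec L, ReesAux.F0_inf L hFG, ReesAux.F0_sup L hspan⟩, ?_⟩, ?_⟩
  · exact le_antisymm (ReesAux.L_le_latticeOf L hFG hspan hstab) (ReesAux.latticeOf_le_L L)
  · rintro F' ⟨⟨hdec', _, _⟩, hLS'⟩
    funext i
    apply le_antisymm
    · intro v hv
      show ReesAux.sl (-i) v ∈ L
      rw [hLS']
      refine le_iSup (fun i : ℤ => Submodule.span (PowerSeries C)
        {x : Fin m → LaurentSeries C | ∃ v ∈ F' i, x = fun j => HahnSeries.single (-i) (v j)}) i ?_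
      exact Submodule.subset_span ⟨v, hv, rfl⟩
    · intro v hv
      have hv' : ReesAux.sl (-i) v ∈ ReesAux.latticeOf F' := by
        show ReesAux.sl (-i) v ∈ ⨆ i : ℤ, Submodule.span (PowerSeries C)
          {x : Fin m → LaurentSeries C | ∃ v ∈ F' i, x = fun j => HahnSeries.single (-i) (v j)}
        rw [← hLS']
        exact hv
      have h2 := ReesAux.ext_coeff F' hdec' _ hv' (-i)
      rw [ReesAux.coeffMap_sl, if_pos rfl, neg_neg] at h2
      exact h2
end

section
/- Let R be a DVR with uniformizer t and fraction field B. For bilatticed vector spaces V = (B^n, 𝓛_1, 𝓛_2) define ord(V) to be the smallest integer i such that t^i 𝓛_1 ⊆ 𝓛_2; if V has type (ν_1 ≥ … ≥ ν_n) then ord(V) = ν_1. Moreover, ord is additive under tensor product: for bilatticed spaces V and W, ord(V ⊗ W) = ord(V) + ord(W), where V ⊗ W carries the tensor product lattices 𝓛_i(V) ⊗_R 𝓛_i(W). -/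
open TensorProduct

section aux

variable {R B W : Type*} [CommRing R] [Field B] [Algebra R B]
    [AddCommGroup W] [Module B W] [Module R W] [IsScalarTower R B W]

lemma aux_pow_smul_linear (u : B) : IsLinearMap R (fun x : W => u • x) := by
  constructor
  · intro x y; rw [smul_add]
  · intro r x
    rw [← algebraMap_smul B r x, smul_smul, mul_comm, ← smul_smul, algebraMap_smul]

lemma aux_key_mem (t : R) (h0 : algebraMap R B t ≠ 0) {ι : Type*} (b : Module.Basis ι B W)
    (μ : ι → ℤ) (i0 : ι) (hmax : ∀ i, μ i ≤ μ i0) :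
    ∀ x ∈ Submodule.span R (Set.range b),
      ((algebraMap R B t) ^ (μ i0)) • x ∈
        Submodule.span R (Set.range fun i => ((algebraMap R B t) ^ (μ i)) • b i) := by
  intro x hx
  set π := algebraMap R B t with hπ
  set L2 := Submodule.span R (Set.range fun i => (π ^ (μ i)) • b i) with hL2
  have hlin := aux_pow_smul_linear (R := R) (W := W) (π ^ (μ i0))
  let f : W →ₗ[R] W := hlin.mk' _
  have : Submodule.span R (Set.range b) ≤ Submodule.comap f L2 := by
    rw [Submodule.span_le]
    rintro _ ⟨j, rfl⟩
    have hj := hmax j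
    simp only [Set.mem_preimage, SetLike.mem_coe, Submodule.mem_comap,
      IsLinearMap.mk'_apply, f]
    have h1 : (π ^ (μ i0)) • b j = (t ^ (μ i0 - μ j).toNat) • ((π ^ (μ j)) • b j) := by
      rw [← algebraMap_smul B (t ^ (μ i0 - μ j).toNat), smul_smul, map_pow, ← zpow_natCast,
        Int.toNat_of_nonneg (by omega : (0:ℤ) ≤ μ i0 - μ j), ← zpow_add₀ h0, sub_add_cancel]
    rw [h1]
    exact Submodule.smul_mem _ _ (Submodule.subset_span ⟨j, rfl⟩)
  exact this hx

lemma aux_key_lb (t : R) (h0 : algebraMap R B t ≠ 0) (ht : ¬ IsUnit t)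
    (hinj : Function.Injective (algebraMap R B)) {ι : Type*} (b : Module.Basis ι B W)
    (μ : ι → ℤ) (i0 : ι) (i : ℤ)
    (hi : ∀ x ∈ Submodule.span R (Set.range b),
      ((algebraMap R B t) ^ i) • x ∈
        Submodule.span R (Set.range fun i => ((algebraMap R B t) ^ (μ i)) • b i)) :
    μ i0 ≤ i := by
  classical
  set π := algebraMap R B t with hπ
  by_contra hlt
  push_neg at hlt
  have hmem := hi (b i0) (Submodule.subset_span ⟨i0, rfl⟩)
  let φ : W →ₗ[R] B := (b.coord i0).restrictScalars R
  have hco : ∀ y ∈ Submodule.span R (Set.range fun j => (π ^ (μ j)) • b j),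
      φ y ∈ Submodule.span R {π ^ (μ i0)} := by
    intro y hy
    have hle : Submodule.span R (Set.range fun j => (π ^ (μ j)) • b j) ≤
        Submodule.comap φ (Submodule.span R {π ^ (μ i0)}) := Submodule.span_le.2 (by
      rintro _ ⟨j, rfl⟩
      simp only [Set.mem_preimage, SetLike.mem_coe, Submodule.mem_comap,
        LinearMap.coe_restrictScalars, φ]
      rw [map_smul, Module.Basis.coord_apply, Module.Basis.repr_self]
      by_cases hji : j = i0
      · subst hji
        simp only [Finsupp.single_eq_same, smul_eq_mul, mul_one]
        exact Submodule.subset_span rfl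
      · rw [Finsupp.single_apply, if_neg hji]
        simp)
    exact hle hy
  have h2 := hco _ hmem
  have h3 : φ ((π ^ i) • b i0) = π ^ i := by
    simp only [LinearMap.coe_restrictScalars, φ, map_smul, Module.Basis.coord_apply, Module.Basis.repr_self,
      Finsupp.single_eq_same, smul_eq_mul, mul_one]
  rw [h3, Submodule.mem_span_singleton] at h2
  obtain ⟨r, hr⟩ := h2
  rw [Algebra.smul_def] at hr
  have hd : (0:ℤ) < μ i0 - i := by omega
  have : algebraMap R B (r * t ^ (μ i0 - i).toNat) = algebraMap R B 1 := by
    have hr' : algebraMap R B r = π ^ (i - μ i0) := by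
      rw [zpow_sub₀ h0, eq_div_iff (zpow_ne_zero _ h0), hr]
    rw [map_one, map_mul, map_pow, ← zpow_natCast π, Int.toNat_of_nonneg hd.le, hr',
      ← zpow_add₀ h0]
    norm_num
  have h1 : r * t ^ (μ i0 - i).toNat = 1 := hinj this
  have : t ∣ 1 := h1 ▸ Dvd.dvd.mul_left (dvd_pow_self t (by omega)) r
  exact ht (isUnit_of_dvd_one this)

lemma aux_isLeast (t : R) (h0 : algebraMap R B t ≠ 0) (ht : ¬ IsUnit t)
    (hinj : Function.Injective (algebraMap R B)) {ι : Type*} (b : Module.Basis ι B W)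
    (μ : ι → ℤ) (i0 : ι) (hmax : ∀ i, μ i ≤ μ i0) :
    IsLeast {i : ℤ | ∀ x ∈ Submodule.span R (Set.range b),
      ((algebraMap R B t) ^ i) • x ∈
        Submodule.span R (Set.range fun i => ((algebraMap R B t) ^ (μ i)) • b i)} (μ i0) :=
  ⟨aux_key_mem t h0 b μ i0 hmax, fun _ hi => aux_key_lb t h0 ht hinj b μ i0 _ hi⟩

end aux

section tens
variable {R B W₁ W₂ : Type*} [CommRing R] [Field B] [Algebra R B]
    [AddCommGroup W₁] [Module B W₁] [Module R W₁] [IsScalarTower R B W₁]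
    [SMulCommClass B R W₁]
    [AddCommGroup W₂] [Module B W₂] [Module R W₂] [IsScalarTower R B W₂]

lemma aux_span_tmul_span (S : Set W₁) (T : Set W₂) :
    Submodule.span R {x : W₁ ⊗[B] W₂ |
        ∃ a ∈ Submodule.span R S, ∃ c ∈ Submodule.span R T, x = a ⊗ₜ[B] c}
      = Submodule.span R {x : W₁ ⊗[B] W₂ | ∃ s ∈ S, ∃ u ∈ T, x = s ⊗ₜ[B] u} := by
  apply le_antisymm
  · rw [Submodule.span_le]
    rintro _ ⟨a, ha, c, hc, rfl⟩
    have claim : ∀ s ∈ S, ∀ c ∈ Submodule.span R T,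
        s ⊗ₜ[B] c ∈ Submodule.span R {x : W₁ ⊗[B] W₂ | ∃ s ∈ S, ∃ u ∈ T, x = s ⊗ₜ[B] u} := by
      intro s hs c hc
      induction hc using Submodule.span_induction with
      | mem u hu => exact Submodule.subset_span ⟨s, hs, u, hu, rfl⟩
      | zero => rw [tmul_zero]; exact Submodule.zero_mem _
      | add x y _ _ hx hy => rw [tmul_add]; exact Submodule.add_mem _ hx hy
      | smul r x _ hx =>
          rw [← algebraMap_smul B r x, ← smul_tmul, algebraMap_smul, ← smul_tmul']
          exact Submodule.smul_mem _ _ hx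
    induction ha using Submodule.span_induction with
    | mem s hs => exact claim s hs c hc
    | zero => rw [zero_tmul]; exact Submodule.zero_mem _
    | add x y _ _ hx hy => rw [add_tmul]; exact Submodule.add_mem _ hx hy
    | smul r x _ hx =>
        rw [← smul_tmul']
        exact Submodule.smul_mem _ _ hx
  · apply Submodule.span_mono
    rintro _ ⟨s, hs, u, hu, rfl⟩
    exact ⟨s, Submodule.subset_span hs, u, Submodule.subset_span hu, rfl⟩
end tens

/-- The order of a bilatticed vector space of type `(ν₁ ≥ … ≥ νₙ)` — the least `i` with
`tⁱ𝓛₁ ⊆ 𝓛₂` — equals `ν₁`; and the order is additive under tensor products: for bilatticed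
spaces `V = (W₁, A₁, A₂)` of type `ν` and `W = (W₂, C₁, C₂)` of type `ρ`, the order of
`V ⊗ W` (with the tensor product lattices) is `ν₁ + ρ₁`. -/
theorem ord_eq_top_type_and_additive
    {R B W₁ W₂ : Type*} [CommRing R] [IsDomain R] [IsDiscreteValuationRing R]
    [Field B] [Algebra R B] [IsFractionRing R B]
    [AddCommGroup W₁] [Module B W₁] [Module R W₁] [IsScalarTower R B W₁]
    [SMulCommClass B R W₁]
    [AddCommGroup W₂] [Module B W₂] [Module R W₂] [IsScalarTower R B W₂]
    (t : R) (ht : Irreducible t)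
    {n m : ℕ} (hn : 0 < n) (hm : 0 < m)
    (ν : Fin n → ℤ) (ρ : Fin m → ℤ) (hν : Antitone ν) (hρ : Antitone ρ)
    (A₁ A₂ : Submodule R W₁) (C₁ C₂ : Submodule R W₂)
    (hA : LatticePairHasType (B := B) t ν A₁ A₂)
    (hC : LatticePairHasType (B := B) t ρ C₁ C₂) :
    IsLeast {i : ℤ | ∀ x ∈ A₁, ((algebraMap R B t) ^ i) • x ∈ A₂} (ν ⟨0, hn⟩) ∧
    IsLeast {i : ℤ | ∀ x ∈ C₁, ((algebraMap R B t) ^ i) • x ∈ C₂} (ρ ⟨0, hm⟩) ∧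
    IsLeast {i : ℤ | ∀ x ∈ Submodule.span R
          {x : W₁ ⊗[B] W₂ | ∃ a ∈ A₁, ∃ c ∈ C₁, x = a ⊗ₜ[B] c},
        ((algebraMap R B t) ^ i) • x ∈ Submodule.span R
          {x : W₁ ⊗[B] W₂ | ∃ a ∈ A₂, ∃ c ∈ C₂, x = a ⊗ₜ[B] c}}
      (ν ⟨0, hn⟩ + ρ ⟨0, hm⟩) := by
  obtain ⟨b, hA1, hA2⟩ := hA
  obtain ⟨c, hC1, hC2⟩ := hC
  have hinj : Function.Injective (algebraMap R B) := IsFractionRing.injective R B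
  have h0 : algebraMap R B t ≠ 0 := fun h =>
    ht.ne_zero (hinj (h.trans (map_zero _).symm))
  have hνmax : ∀ i, ν i ≤ ν ⟨0, hn⟩ := fun i => hν (by simp [Fin.le_def])
  have hρmax : ∀ i, ρ i ≤ ρ ⟨0, hm⟩ := fun i => hρ (by simp [Fin.le_def])
  refine ⟨?_, ?_, ?_⟩
  · rw [hA1, hA2]
    exact aux_isLeast t h0 ht.not_isUnit hinj b ν ⟨0, hn⟩ hνmax
  · rw [hC1, hC2]
    exact aux_isLeast t h0 ht.not_isUnit hinj c ρ ⟨0, hm⟩ hρmax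
  · set π := algebraMap R B t with hπ
    set bc := Module.Basis.tensorProduct b c with hbc
    have hset1 : Submodule.span R {x : W₁ ⊗[B] W₂ | ∃ a ∈ A₁, ∃ c' ∈ C₁, x = a ⊗ₜ[B] c'}
        = Submodule.span R (Set.range bc) := by
      rw [hA1, hC1, aux_span_tmul_span]
      congr 1
      ext x
      constructor
      · rintro ⟨s, ⟨i, rfl⟩, u, ⟨j, rfl⟩, rfl⟩
        exact ⟨(i, j), (Module.Basis.tensorProduct_apply b c i j)⟩
      · rintro ⟨⟨i, j⟩, rfl⟩
        exact ⟨b i, ⟨i, rfl⟩, c j, ⟨j, rfl⟩, (Module.Basis.tensorProduct_apply b c i j)⟩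
    have hset2 : Submodule.span R {x : W₁ ⊗[B] W₂ | ∃ a ∈ A₂, ∃ c' ∈ C₂, x = a ⊗ₜ[B] c'}
        = Submodule.span R (Set.range fun p : Fin n × Fin m =>
            (π ^ (ν p.1 + ρ p.2)) • bc p) := by
      rw [hA2, hC2, aux_span_tmul_span]
      congr 1
      ext x
      have hkey : ∀ (i : Fin n) (j : Fin m),
          ((π ^ (ν i)) • b i) ⊗ₜ[B] ((π ^ (ρ j)) • c j)
            = (π ^ (ν i + ρ j)) • bc (i, j) := by
        intro i j
        rw [hbc, Module.Basis.tensorProduct_apply, TensorProduct.smul_tmul_smul, ← zpow_add₀ h0]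
      constructor
      · rintro ⟨s, ⟨i, rfl⟩, u, ⟨j, rfl⟩, rfl⟩
        exact ⟨(i, j), (hkey i j).symm⟩
      · rintro ⟨⟨i, j⟩, rfl⟩
        exact ⟨_, ⟨i, rfl⟩, _, ⟨j, rfl⟩, (hkey i j).symm⟩
    rw [hset1, hset2]
    have := aux_isLeast (W := W₁ ⊗[B] W₂) t h0 ht.not_isUnit hinj bc
      (fun p : Fin n × Fin m => ν p.1 + ρ p.2) (⟨0, hn⟩, ⟨0, hm⟩)
      (fun p => add_le_add (hνmax p.1) (hρmax p.2))
    exact this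
end
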